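/- arXiv:2304.09705 — 3 statements merged into one kernel-verified Lean document; each statement's English description precedes it below -/
import Mathlib

section
/- Let X be a nonnegative random variable that is regularly varying with index α > 1, let K be an ℕ-valued integrable random variable (possibly dependent on X), and let (X_j)_{j≥1} be i.i.d. copies of X, independent of the pair (X, K). Define H := max(X, max_{1≤j≤K} X_j) (with the maximum over an empty index set equal to 0). Then P(H > x) / P(X > x) → 1 + E[K] as x → ∞; in particular H is regularly varying with index α. -/
open MeasureTheory ProbabilityTheory Filter Topology Asymptotics
open scoped ENNReal

/-- `tailP P Z x = P(Z > x)` as a real number. -/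
noncomputable def tailP {Ω : Type*} [MeasurableSpace Ω] (P : Measure Ω) (Z : Ω → ℝ) (x : ℝ) : ℝ :=
  (P {ω | x < Z ω}).toReal

/-- A positive measurable function `L` is slowly varying if `L(cx)/L(x) → 1` for every `c > 0`. -/
def SlowlyVarying (L : ℝ → ℝ) : Prop :=
  (∀ x > 0, 0 < L x) ∧ ∀ c > 0, Tendsto (fun x => L (c * x) / L x) atTop (𝓝 1)

/-- A nonnegative random variable `Z` is regularly varying with index `α` if
`P(Z > x) = x^{-α} L(x)` for all `x > 0`, with `L` slowly varying. -/
def RegVarying {Ω : Type*} [MeasurableSpace Ω] (P : Measure Ω) (Z : Ω → ℝ) (α : ℝ) : Prop :=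
  ∃ L : ℝ → ℝ, Measurable L ∧ SlowlyVarying L ∧ ∀ x > 0, tailP P Z x = x ^ (-α) * L x

section Aux

variable {Ω : Type*} [MeasurableSpace Ω] (P : Measure Ω) [IsProbabilityMeasure P]

lemma aux_sup_le {k : ℕ} (f : ℕ → ℝ) {x : ℝ} (hx : 0 ≤ x) :
    (⨆ j : Fin k, f (j : ℕ)) ≤ x ↔ ∀ j < k, f j ≤ x := by
  cases k with
  | zero => simp [ciSup_of_empty, Real.sSup_empty, hx]
  | succ n =>
    rw [ciSup_le_iff (Set.Finite.bddAbove (Set.finite_range _))]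
    constructor
    · intro h j hj; exact h ⟨j, hj⟩
    · intro h j; exact h j j.2

lemma aux_tailP_antitone (Z : Ω → ℝ) : Antitone (tailP P Z) := by
  intro a b hab
  exact ENNReal.toReal_mono (measure_ne_top _ _)
    (measure_mono (fun ω hω => lt_of_le_of_lt hab hω))

lemma aux_partition
    (X : Ω → ℝ) (K : Ω → ℕ) (Xs : ℕ → Ω → ℝ)
    (hXmeas : Measurable X) (hKmeas : Measurable K) (hXsmeas : ∀ j, Measurable (Xs j))
    (hiid : ∀ j, IdentDistrib (Xs j) X P P)
    (hXsind : iIndepFun Xs P)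
    (hind2 : IndepFun (fun ω => (X ω, K ω)) (fun ω j => Xs j ω) P)
    (H : Ω → ℝ)
    (hH : ∀ ω, H ω = max (X ω) (⨆ j : Fin (K ω), Xs (j : ℕ) ω))
    {x : ℝ} (hx : 0 < x) :
    MeasurableSet {ω | H ω ≤ x} ∧
    P {ω | H ω ≤ x} =
      ∑' k : ℕ, P {ω | X ω ≤ x ∧ K ω = k} * (P {ω | X ω ≤ x}) ^ k := by
  set E : ℕ → Set Ω := fun k =>
    {ω | X ω ≤ x ∧ K ω = k} ∩ ⋂ j ∈ Finset.range k, {ω | Xs j ω ≤ x} with hE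
  have hmeas1 : ∀ k, MeasurableSet {ω | X ω ≤ x ∧ K ω = k} := fun k =>
    (hXmeas measurableSet_Iic).inter (hKmeas (measurableSet_singleton k))
  have hmeasE : ∀ k, MeasurableSet (E k) := fun k =>
    (hmeas1 k).inter (Finset.measurableSet_biInter _ fun j _ => hXsmeas j measurableSet_Iic)
  have hset : {ω | H ω ≤ x} = ⋃ k, E k := by
    ext ω
    simp only [Set.mem_setOf_eq, hH ω, max_le_iff, Set.mem_iUnion, hE, Set.mem_inter_iff,
      Set.mem_setOf_eq, Set.mem_iInter, Finset.mem_range]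
    constructor
    · rintro ⟨h1, h2⟩
      exact ⟨K ω, ⟨h1, rfl⟩, fun j hj => (aux_sup_le (fun j => Xs j ω) hx.le).1 h2 j hj⟩
    · rintro ⟨k, ⟨h1, rfl⟩, h2⟩
      exact ⟨h1, (aux_sup_le (fun j => Xs j ω) hx.le).2 h2⟩
  have hdisj : Pairwise (Function.onFun Disjoint E) := by
    intro k l hkl
    refine Set.disjoint_left.2 ?_
    rintro ω ⟨⟨_, hk⟩, _⟩ ⟨⟨_, hl⟩, _⟩
    exact hkl (hk ▸ hl ▸ rfl)
  have hEk : ∀ k, P (E k) = P {ω | X ω ≤ x ∧ K ω = k} * (P {ω | X ω ≤ x}) ^ k := by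
    intro k
    have h1 : {ω | X ω ≤ x ∧ K ω = k} =
        (fun ω => (X ω, K ω)) ⁻¹' (Set.Iic x ×ˢ ({k} : Set ℕ)) := by
      ext ω; simp only [Set.mem_preimage, Set.mem_prod, Set.mem_Iic, Set.mem_singleton_iff,
        Set.mem_setOf_eq]
    have h2 : (⋂ j ∈ Finset.range k, {ω | Xs j ω ≤ x}) =
        (fun ω j => Xs j ω) ⁻¹' (⋂ j ∈ Finset.range k, Function.eval j ⁻¹' Set.Iic x) := by
      ext ω; simp [Function.eval]
    have hind := (indepFun_iff_measure_inter_preimage_eq_mul.1 hind2)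
      (Set.Iic x ×ˢ ({k} : Set ℕ)) (⋂ j ∈ Finset.range k, Function.eval j ⁻¹' Set.Iic x)
      (measurableSet_Iic.prod (measurableSet_singleton k))
      (Finset.measurableSet_biInter _ fun j _ => measurable_pi_apply j measurableSet_Iic)
    have h3 : P ((fun ω j => Xs j ω) ⁻¹' (⋂ j ∈ Finset.range k, Function.eval j ⁻¹' Set.Iic x))
        = (P {ω | X ω ≤ x}) ^ k := by
      have hpre : ((fun ω j => Xs j ω) ⁻¹' (⋂ j ∈ Finset.range k, Function.eval j ⁻¹' Set.Iic x))
          = ⋂ j ∈ Finset.range k, Xs j ⁻¹' Set.Iic x := by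
        ext ω; simp [Function.eval]
      rw [hpre, (iIndepFun_iff_measure_inter_preimage_eq_mul.1 hXsind) (Finset.range k)
        (sets := fun _ => Set.Iic x) (fun i _ => measurableSet_Iic)]
      have : ∀ j, P (Xs j ⁻¹' Set.Iic x) = P {ω | X ω ≤ x} := by
        intro j
        have := (hiid j).measure_mem_eq (s := Set.Iic x) measurableSet_Iic
        simpa [Set.preimage, Set.Iic] using this
      simp [this, Finset.prod_const, Finset.card_range]
    have hEkdef : E k = (fun ω => (X ω, K ω)) ⁻¹' (Set.Iic x ×ˢ ({k} : Set ℕ)) ∩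
          (fun ω j => Xs j ω) ⁻¹' (⋂ j ∈ Finset.range k, Function.eval j ⁻¹' Set.Iic x) := by
      rw [hE]; dsimp only; rw [h1, h2]
    rw [hEkdef, hind, ← h1, h3]
  constructor
  · rw [hset]; exact MeasurableSet.iUnion hmeasE
  · rw [hset, measure_iUnion hdisj hmeasE]
    exact tsum_congr hEk

lemma aux_lint
    (X : Ω → ℝ) (K : Ω → ℕ)
    (hXmeas : Measurable X) (hKmeas : Measurable K) (x : ℝ) :
    ∫⁻ ω, Set.indicator {ω | X ω ≤ x} (fun ω => (P {ω | X ω ≤ x}) ^ K ω) ω ∂P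
      = ∑' k : ℕ, P {ω | X ω ≤ x ∧ K ω = k} * (P {ω | X ω ≤ x}) ^ k := by
  set Q : ℝ≥0∞ := P {ω | X ω ≤ x} with hQ
  have hmeas1 : ∀ k, MeasurableSet {ω | X ω ≤ x ∧ K ω = k} := fun k =>
    (hXmeas measurableSet_Iic).inter (hKmeas (measurableSet_singleton k))
  have hfun : ∀ ω, Set.indicator {ω | X ω ≤ x} (fun ω => Q ^ K ω) ω
      = ∑' k : ℕ, Set.indicator {ω | X ω ≤ x ∧ K ω = k} (fun _ => Q ^ k) ω := by
    intro ω
    rw [tsum_eq_single (K ω) (fun k hk => by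
      apply Set.indicator_of_notMem
      simp only [Set.mem_setOf_eq, not_and]
      intro _ h; exact hk h.symm)]
    by_cases h : X ω ≤ x <;> simp [Set.indicator, h]
  calc ∫⁻ ω, Set.indicator {ω | X ω ≤ x} (fun ω => Q ^ K ω) ω ∂P
      = ∫⁻ ω, ∑' k : ℕ, Set.indicator {ω | X ω ≤ x ∧ K ω = k} (fun _ => Q ^ k) ω ∂P := by
        exact lintegral_congr hfun
    _ = ∑' k : ℕ, ∫⁻ ω, Set.indicator {ω | X ω ≤ x ∧ K ω = k} (fun _ => Q ^ k) ω ∂P := by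
        exact lintegral_tsum fun k => (measurable_const.indicator (hmeas1 k)).aemeasurable
    _ = ∑' k : ℕ, P {ω | X ω ≤ x ∧ K ω = k} * Q ^ k := by
        refine tsum_congr fun k => ?_
        rw [lintegral_indicator_const (hmeas1 k), mul_comm]

lemma aux_toReal
    (X : Ω → ℝ) (K : Ω → ℕ)
    (hXmeas : Measurable X) (hKmeas : Measurable K) (x : ℝ) :
    (∫⁻ ω, Set.indicator {ω | X ω ≤ x} (fun ω => (P {ω | X ω ≤ x}) ^ K ω) ω ∂P).toReal
      = ∫ ω, Set.indicator {ω | X ω ≤ x}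
          (fun ω => (P {ω | X ω ≤ x}).toReal ^ K ω) ω ∂P := by
  set Q : ℝ≥0∞ := P {ω | X ω ≤ x} with hQ
  have hmsX : MeasurableSet {ω | X ω ≤ x} := hXmeas measurableSet_Iic
  have hmeasf : Measurable fun ω => Set.indicator {ω | X ω ≤ x}
      (fun ω => Q.toReal ^ K ω) ω :=
    ((measurable_from_nat (f := fun k => Q.toReal ^ k)).comp hKmeas).indicator hmsX
  rw [integral_eq_lintegral_of_nonneg_ae
    (Filter.Eventually.of_forall fun ω =>
      Set.indicator_nonneg (fun ω _ => pow_nonneg ENNReal.toReal_nonneg _) ω)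
    hmeasf.aestronglyMeasurable]
  congr 1
  refine lintegral_congr fun ω => ?_
  by_cases h : ω ∈ {ω' | X ω' ≤ x}
  · rw [Set.indicator_of_mem h, Set.indicator_of_mem h,
      ENNReal.ofReal_pow ENNReal.toReal_nonneg, ENNReal.ofReal_toReal (measure_ne_top _ _)]
  · rw [Set.indicator_of_notMem h, Set.indicator_of_notMem h, ENNReal.ofReal_zero]

end Aux

/-- Tail asymptotics for the maximum of the marks of a generic cluster in the renewal
Poisson cluster process: `P(H > x) ∼ (1 + E[K]) P(X > x)`, and `H` is regularly varying. -/
theorem tail_max_renewal_cluster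
    {Ω : Type*} [MeasurableSpace Ω] (P : Measure Ω) [IsProbabilityMeasure P]
    (α : ℝ) (hα : 1 < α)
    (X : Ω → ℝ) (K : Ω → ℕ) (Xs : ℕ → Ω → ℝ)
    (hXmeas : Measurable X) (hKmeas : Measurable K) (hXsmeas : ∀ j, Measurable (Xs j))
    (hXnn : ∀ ω, 0 ≤ X ω)
    (hXrv : RegVarying P X α)
    (hKint : Integrable (fun ω => (K ω : ℝ)) P)
    (hiid : ∀ j, IdentDistrib (Xs j) X P P)
    (hXsind : iIndepFun Xs P)
    (hind2 : IndepFun (fun ω => (X ω, K ω)) (fun ω j => Xs j ω) P)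
    (H : Ω → ℝ)
    (hH : ∀ ω, H ω = max (X ω) (⨆ j : Fin (K ω), Xs (j : ℕ) ω)) :
    Tendsto (fun x => tailP P H x / tailP P X x) atTop
      (𝓝 (1 + ∫ ω, (K ω : ℝ) ∂P)) ∧
    RegVarying P H α := by
  obtain ⟨L, hLmeas, hLsv, hLtail⟩ := hXrv
  set q : ℝ → ℝ := fun x => (P {ω | X ω ≤ x}).toReal with hq
  have hq0 : ∀ x, 0 ≤ q x := fun x => ENNReal.toReal_nonneg
  have hq1 : ∀ x, q x ≤ 1 := by
    intro x
    calc (P {ω | X ω ≤ x}).toReal ≤ (1 : ℝ≥0∞).toReal :=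
        ENNReal.toReal_mono ENNReal.one_ne_top prob_le_one
      _ = 1 := by simp
  have hmsX : ∀ x : ℝ, MeasurableSet {ω | X ω ≤ x} := fun x => hXmeas measurableSet_Iic
  have hcomplX : ∀ x : ℝ, {ω | x < X ω} = {ω | X ω ≤ x}ᶜ := by
    intro x; ext ω; simp [not_le]
  have htailq : ∀ x, tailP P X x = 1 - q x := by
    intro x
    rw [tailP, hcomplX, measure_compl (hmsX x) (measure_ne_top _ _), measure_univ,
      ENNReal.toReal_sub_of_le prob_le_one ENNReal.one_ne_top]
    simp [hq]
  -- the real-valued integrand A and g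
  set A : ℝ → Ω → ℝ := fun x ω =>
    Set.indicator {ω | X ω ≤ x} (fun ω => q x ^ K ω) ω with hA
  set g : ℝ → Ω → ℝ := fun x ω =>
    Set.indicator {ω | X ω ≤ x} (fun ω => ∑ i ∈ Finset.range (K ω), q x ^ i) ω with hg
  have hmeasA : ∀ x, Measurable (A x) := fun x =>
    ((measurable_from_nat (f := fun k => q x ^ k)).comp hKmeas).indicator (hmsX x)
  have hmeasg : ∀ x, Measurable (g x) := fun x =>
    ((measurable_from_nat (f := fun k => ∑ i ∈ Finset.range k, q x ^ i)).comp
      hKmeas).indicator (hmsX x)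
  have hintA : ∀ x, Integrable (A x) P := by
    intro x
    refine Integrable.mono' (integrable_const 1) (hmeasA x).aestronglyMeasurable ?_
    refine Filter.Eventually.of_forall fun ω => ?_
    rw [Real.norm_eq_abs, abs_of_nonneg (Set.indicator_nonneg
      (fun ω _ => pow_nonneg (hq0 x) _) ω)]
    refine Set.indicator_le' (fun ω _ => pow_le_one₀ (hq0 x) (hq1 x)) (fun _ _ => one_pos.le) ω
  have hgbound : ∀ x ω, ‖g x ω‖ ≤ (K ω : ℝ) := by
    intro x ω
    have hnn : 0 ≤ g x ω := Set.indicator_nonneg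
      (fun ω _ => Finset.sum_nonneg fun i _ => pow_nonneg (hq0 x) _) ω
    rw [Real.norm_eq_abs, abs_of_nonneg hnn]
    refine Set.indicator_le' (fun ω _ => ?_) (fun ω _ => Nat.cast_nonneg _) ω
    calc ∑ i ∈ Finset.range (K ω), q x ^ i ≤ ∑ i ∈ Finset.range (K ω), 1 :=
        Finset.sum_le_sum fun i _ => pow_le_one₀ (hq0 x) (hq1 x)
      _ = (K ω : ℝ) := by simp
  have hintg : ∀ x, Integrable (g x) P := fun x =>
    Integrable.mono' hKint (hmeasg x).aestronglyMeasurable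
      (Filter.Eventually.of_forall (hgbound x))
  -- key identity
  have hkey : ∀ x : ℝ, 0 < x →
      tailP P H x = tailP P X x * (1 + ∫ ω, g x ω ∂P) := by
    intro x hx
    obtain ⟨hmsH, hPH⟩ := aux_partition P X K Xs hXmeas hKmeas hXsmeas hiid hXsind hind2 H hH hx
    have h1 : (P {ω | H ω ≤ x}).toReal = ∫ ω, A x ω ∂P := by
      rw [hPH, ← aux_lint P X K hXmeas hKmeas x, aux_toReal P X K hXmeas hKmeas x]
    have hcomplH : {ω | x < H ω} = {ω | H ω ≤ x}ᶜ := by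
      ext ω; simp [not_le]
    have htailH : tailP P H x = 1 - ∫ ω, A x ω ∂P := by
      rw [tailP, hcomplH, measure_compl hmsH (measure_ne_top _ _), measure_univ,
        ENNReal.toReal_sub_of_le prob_le_one ENNReal.one_ne_top, h1]
      simp
    have hpoint : ∀ ω, tailP P X x * g x ω =
        Set.indicator {ω | X ω ≤ x} (fun _ => (1 : ℝ)) ω - A x ω := by
      intro ω
      rw [htailq x]
      by_cases h : ω ∈ {ω' | X ω' ≤ x}
      · rw [hg, hA]
        dsimp only
        rw [Set.indicator_of_mem h, Set.indicator_of_mem h, Set.indicator_of_mem h]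
        have hgs := geom_sum_mul (q x) (K ω)
        linear_combination -hgs
      · rw [hg, hA]
        dsimp only
        rw [Set.indicator_of_notMem h, Set.indicator_of_notMem h, Set.indicator_of_notMem h]
        ring
    have hint1 : Integrable (fun ω => Set.indicator {ω | X ω ≤ x} (fun _ => (1:ℝ)) ω) P :=
      (integrable_const (1:ℝ)).indicator (hmsX x)
    have hintmul : tailP P X x * ∫ ω, g x ω ∂P = q x - ∫ ω, A x ω ∂P := by
      rw [← integral_const_mul]
      rw [integral_congr_ae (Filter.Eventually.of_forall hpoint)]
      rw [integral_sub hint1 (hintA x), integral_indicator_const (1:ℝ) (hmsX x)]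
      simp [hq, Measure.real]
    rw [htailH, mul_add, mul_one, hintmul, htailq x]
    ring
  -- positivity of the tail of X
  have hXpos : ∀ x : ℝ, 0 < x → 0 < tailP P X x := by
    intro x hx
    rw [hLtail x hx]
    exact mul_pos (Real.rpow_pos_of_pos hx _) (hLsv.1 x hx)
  -- the tail of X tends to 0
  have htail0 : Tendsto (tailP P X) atTop (𝓝 0) := by
    have hanti := aux_tailP_antitone P X
    have hseq : Tendsto (fun n : ℕ => P {ω | (n : ℝ) < X ω}) atTop (𝓝 0) := by
      have hInt : (⋂ n : ℕ, {ω | (n : ℝ) < X ω}) = ∅ := by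
        ext ω
        simp only [Set.mem_iInter, Set.mem_setOf_eq, Set.mem_empty_iff_false, iff_false,
          not_forall, not_lt]
        obtain ⟨n, hn⟩ := exists_nat_gt (X ω)
        exact ⟨n, hn.le⟩
      have := tendsto_measure_iInter_atTop (μ := P)
        (s := fun n : ℕ => {ω | (n : ℝ) < X ω})
        (fun n => ((hXmeas measurableSet_Ioi).nullMeasurableSet))
        (fun m n hmn => fun ω hω => by
          simp only [Set.mem_setOf_eq] at hω ⊢
          exact lt_of_le_of_lt (by exact_mod_cast hmn) hω)
        ⟨0, measure_ne_top _ _⟩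
      rwa [hInt, measure_empty] at this
    have hseqR : Tendsto (fun n : ℕ => tailP P X n) atTop (𝓝 0) := by
      have h0 : Tendsto ENNReal.toReal (𝓝 0) (𝓝 0) := by
        simpa using (ENNReal.tendsto_toReal (a := 0) (by simp))
      exact h0.comp hseq
    refine tendsto_of_tendsto_of_tendsto_of_le_of_le' tendsto_const_nhds
      (hseqR.comp tendsto_nat_floor_atTop) ?_ ?_
    · exact Filter.Eventually.of_forall fun x => ENNReal.toReal_nonneg
    · filter_upwards [eventually_ge_atTop (0:ℝ)] with x hx
      exact hanti (Nat.floor_le hx)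
  have hqlim : Tendsto q atTop (𝓝 1) := by
    have : Tendsto (fun x => 1 - tailP P X x) atTop (𝓝 (1 - 0)) :=
      tendsto_const_nhds.sub htail0
    simp only [sub_zero] at this
    refine this.congr fun x => ?_
    rw [htailq x]; ring
  -- pointwise convergence of g
  have hglim : ∀ ω, Tendsto (fun x => g x ω) atTop (𝓝 (K ω : ℝ)) := by
    intro ω
    have hcont : Continuous (fun t : ℝ => ∑ i ∈ Finset.range (K ω), t ^ i) := by
      continuity
    have h2 : Tendsto (fun x => ∑ i ∈ Finset.range (K ω), q x ^ i) atTop (𝓝 (K ω : ℝ)) := by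
      have := (hcont.tendsto 1).comp hqlim
      simpa [Function.comp_def] using this
    refine Tendsto.congr' ?_ h2
    filter_upwards [eventually_ge_atTop (X ω)] with x hx
    have hm : ω ∈ {ω' | X ω' ≤ x} := hx
    rw [hg]
    dsimp only
    rw [Set.indicator_of_mem hm]
  -- dominated convergence
  have hDCT : Tendsto (fun x => ∫ ω, g x ω ∂P) atTop (𝓝 (∫ ω, (K ω : ℝ) ∂P)) := by
    refine tendsto_integral_filter_of_dominated_convergence (fun ω => (K ω : ℝ))
      (Filter.Eventually.of_forall fun x => (hmeasg x).aestronglyMeasurable)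
      (Filter.Eventually.of_forall fun x =>
        Filter.Eventually.of_forall fun ω => hgbound x ω)
      hKint
      (Filter.Eventually.of_forall fun ω => hglim ω)
  -- first conclusion
  have hmain : Tendsto (fun x => tailP P H x / tailP P X x) atTop
      (𝓝 (1 + ∫ ω, (K ω : ℝ) ∂P)) := by
    have h1 : Tendsto (fun x => 1 + ∫ ω, g x ω ∂P) atTop (𝓝 (1 + ∫ ω, (K ω : ℝ) ∂P)) :=
      tendsto_const_nhds.add hDCT
    refine h1.congr' ?_
    filter_upwards [eventually_gt_atTop (0:ℝ)] with x hx
    rw [hkey x hx]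
    exact (mul_div_cancel_left₀ _ (hXpos x hx).ne').symm
  refine ⟨hmain, ?_⟩
  -- regular variation of H
  have hEK : (0:ℝ) ≤ ∫ ω, (K ω : ℝ) ∂P :=
    integral_nonneg fun ω => Nat.cast_nonneg _
  have hSne : (1 + ∫ ω, (K ω : ℝ) ∂P) ≠ 0 := by linarith
  set r : ℝ → ℝ := fun x => tailP P H x / tailP P X x with hr
  have hHX : ∀ x, tailP P X x ≤ tailP P H x := by
    intro x
    refine ENNReal.toReal_mono (measure_ne_top _ _) (measure_mono fun ω hω => ?_)
    simp only [Set.mem_setOf_eq] at hω ⊢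
    exact lt_of_lt_of_le hω (by rw [hH ω]; exact le_max_left _ _)
  have hrpos : ∀ x, 0 < x → 0 < r x := fun x hx =>
    div_pos (lt_of_lt_of_le (hXpos x hx) (hHX x)) (hXpos x hx)
  have hrmeas : Measurable r :=
    ((aux_tailP_antitone P H).measurable).div ((aux_tailP_antitone P X).measurable)
  refine ⟨fun x => L x * r x, hLmeas.mul hrmeas, ⟨?_, ?_⟩, ?_⟩
  · intro x hx
    exact mul_pos (hLsv.1 x hx) (hrpos x hx)
  · intro c hc
    have hrc : Tendsto (fun x => r (c * x)) atTop (𝓝 (1 + ∫ ω, (K ω : ℝ) ∂P)) :=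
      hmain.comp (Filter.Tendsto.const_mul_atTop hc tendsto_id)
    have hrdiv : Tendsto (fun x => r (c * x) / r x) atTop (𝓝 1) := by
      have := hrc.div hmain hSne
      rwa [div_self hSne] at this
    have := (hLsv.2 c hc).mul hrdiv
    rw [mul_one] at this
    refine this.congr fun x => ?_
    rw [div_mul_div_comm]
  · intro x hx
    rw [← mul_assoc, ← hLtail x hx, hr]
    dsimp only
    rw [mul_comm]
    exact (div_mul_cancel₀ _ (hXpos x hx).ne').symm
end

section
/- Let X be a nonnegative random variable that is regularly varying with index α > 1, let L be an ℕ-valued random variable (possibly dependent on X) with E[L] < 1, and let H, H_1, H_2, … be identically distributed nonnegative random variables such that (H_j)_{j≥1} is an i.i.d. sequence independent of the pair (X, L) and H has the same distribution as max(X, max_{1≤j≤L} H_j) (with the maximum over an empty index set equal to 0). Then P(H > x) / P(X > x) → 1/(1 − E[L]) as x → ∞; in particular H is regularly varying with index α. -/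
open MeasureTheory ProbabilityTheory Filter Topology Asymptotics

open scoped ENNReal NNReal


private lemma geom_aux (Q T : ℝ≥0∞) (hQT : Q + T = 1) :
    ∀ n : ℕ, Q ^ n + T * ∑ i ∈ Finset.range n, Q ^ i = 1 := by
  intro n
  induction n with
  | zero => simp
  | succ n ih =>
    rw [Finset.sum_range_succ, mul_add, pow_succ]
    calc Q ^ n * Q + (T * ∑ i ∈ Finset.range n, Q ^ i + T * Q ^ n)
        = Q ^ n * (Q + T) + T * ∑ i ∈ Finset.range n, Q ^ i := by ring
      _ = 1 := by rw [hQT, mul_one]; exact ih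

private lemma key_identity
    {Ω : Type*} [MeasurableSpace Ω] (P : Measure Ω) [IsProbabilityMeasure P]
    (X : Ω → ℝ) (Lnum : Ω → ℕ)
    (hXmeas : Measurable X) (hLmeas : Measurable Lnum)
    (H : Ω → ℝ) (Hs : ℕ → Ω → ℝ)
    (hHmeas : Measurable H) (hHsmeas : ∀ j, Measurable (Hs j))
    (hHsid : ∀ j, IdentDistrib (Hs j) H P P)
    (hHsiid : iIndepFun Hs P)
    (hind : IndepFun (fun ω => (X ω, Lnum ω)) (fun ω j => Hs j ω) P)
    (hfix : IdentDistrib H (fun ω => max (X ω) (⨆ j : Fin (Lnum ω), Hs (j : ℕ) ω)) P P)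
    (x : ℝ) (hx : 0 < x) :
    P {ω | x < H ω} = P {ω | x < X ω}
      + P {ω | x < H ω} * ∑' i : ℕ, (P {ω | H ω ≤ x}) ^ i * P ({ω | X ω ≤ x} ∩ {ω | i < Lnum ω}) := by
  classical
  set T : ℝ≥0∞ := P {ω | x < H ω} with hT
  set S : ℝ≥0∞ := P {ω | x < X ω} with hS
  set Q : ℝ≥0∞ := P {ω | H ω ≤ x} with hQ
  set p : ℕ → ℝ≥0∞ := fun n => P {ω | X ω ≤ x ∧ Lnum ω = n} with hp
  set g : ℕ → ℝ≥0∞ := fun i => P ({ω | X ω ≤ x} ∩ {ω | i < Lnum ω}) with hg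
  have msXle : MeasurableSet {ω | X ω ≤ x} := hXmeas measurableSet_Iic
  have msXgt : MeasurableSet {ω | x < X ω} := hXmeas measurableSet_Ioi
  have msHle : MeasurableSet {ω | H ω ≤ x} := hHmeas measurableSet_Iic
  have msLn : ∀ n, MeasurableSet {ω | Lnum ω = n} := fun n =>
    hLmeas (MeasurableSet.singleton n)
  have msHs : ∀ j, MeasurableSet {ω | Hs j ω ≤ x} := fun j => hHsmeas j measurableSet_Iic
  set En : ℕ → Set Ω := fun n =>
    ({ω | X ω ≤ x ∧ Lnum ω = n}) ∩ (⋂ j ∈ Finset.range n, {ω | Hs j ω ≤ x}) with hEn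
  have msEn : ∀ n, MeasurableSet (En n) := by
    intro n
    exact ((show MeasurableSet {ω | X ω ≤ x ∧ Lnum ω = n} from msXle.inter (msLn n)).inter
      (MeasurableSet.biInter (Finset.range n).countable_toSet (fun j _ => msHs j)))
  have hEdisj : Pairwise (Function.onFun Disjoint En) := by
    intro m n hmn
    refine Set.disjoint_left.2 (fun ω hm hn => hmn ?_)
    exact hm.1.2.symm.trans hn.1.2
  have hsup : ∀ ω, ((⨆ j : Fin (Lnum ω), Hs (j : ℕ) ω) ≤ x ↔ ∀ j, j < Lnum ω → Hs j ω ≤ x) := by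
    intro ω
    rcases Nat.eq_zero_or_pos (Lnum ω) with h0 | hpos
    · have hempty : IsEmpty (Fin (Lnum ω)) := ⟨fun j => absurd j.2 (by omega)⟩
      rw [Real.iSup_of_isEmpty]
      constructor
      · intro _ j hj; omega
      · intro _; exact hx.le
    · have hne : Nonempty (Fin (Lnum ω)) := ⟨⟨0, hpos⟩⟩
      have hbdd : BddAbove (Set.range fun j : Fin (Lnum ω) => Hs (j : ℕ) ω) :=
        (Set.finite_range _).bddAbove
      rw [ciSup_le_iff hbdd]
      constructor
      · intro h j hj; exact h ⟨j, hj⟩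
      · intro h j; exact h j j.2
  have hU : (⋃ n, En n) = {ω | x < max (X ω) (⨆ j : Fin (Lnum ω), Hs (j : ℕ) ω)}ᶜ := by
    ext ω
    simp only [Set.mem_iUnion, Set.mem_compl_iff, Set.mem_setOf_eq, not_lt, max_le_iff, hEn,
      Set.mem_inter_iff, Set.mem_iInter, Finset.mem_range]
    constructor
    · rintro ⟨n, ⟨hXω, hLω⟩, hall⟩
      subst hLω
      exact ⟨hXω, (hsup ω).2 hall⟩
    · rintro ⟨hXω, hsle⟩
      exact ⟨Lnum ω, ⟨hXω, rfl⟩, fun j hj => (hsup ω).1 hsle j hj⟩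
  have hfix' : T = P {ω | x < max (X ω) (⨆ j : Fin (Lnum ω), Hs (j : ℕ) ω)} :=
    hfix.measure_mem_eq (s := Set.Ioi x) measurableSet_Ioi
  have hcompl : T + P (⋃ n, En n) = 1 := by
    have h2 : {ω | x < max (X ω) (⨆ j : Fin (Lnum ω), Hs (j : ℕ) ω)} = (⋃ n, En n)ᶜ := by
      rw [hU, compl_compl]
    rw [hfix', h2, add_comm, measure_add_measure_compl (MeasurableSet.iUnion msEn)]
    exact measure_univ
  have hPEn : ∀ n, P (En n) = p n * Q ^ n := by
    intro n
    have hAeq : (fun ω => (X ω, Lnum ω)) ⁻¹' (Set.Iic x ×ˢ ({n} : Set ℕ))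
        = {ω | X ω ≤ x ∧ Lnum ω = n} := by
      ext ω
      simp only [Set.mem_preimage, Set.mem_prod, Set.mem_Iic, Set.mem_singleton_iff,
        Set.mem_setOf_eq]
    have hBeq : (fun ω (j : ℕ) => Hs j ω) ⁻¹' {h : ℕ → ℝ | ∀ j ∈ Finset.range n, h j ≤ x}
        = ⋂ j ∈ Finset.range n, {ω | Hs j ω ≤ x} := by
      ext ω; simp
    have hBmeas : MeasurableSet {h : ℕ → ℝ | ∀ j ∈ Finset.range n, h j ≤ x} := by
      have heq2 : {h : ℕ → ℝ | ∀ j ∈ Finset.range n, h j ≤ x}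
          = ⋂ j ∈ Finset.range n, (fun h : ℕ → ℝ => h j) ⁻¹' Set.Iic x := by
        ext h; simp
      rw [heq2]
      exact MeasurableSet.biInter (Finset.range n).countable_toSet
        (fun j _ => (measurable_pi_apply j) measurableSet_Iic)
    have hpreim1 : En n = (fun ω => (X ω, Lnum ω)) ⁻¹' (Set.Iic x ×ˢ ({n} : Set ℕ))
        ∩ (fun ω (j : ℕ) => Hs j ω) ⁻¹' {h : ℕ → ℝ | ∀ j ∈ Finset.range n, h j ≤ x} := by
      rw [hAeq, hBeq]
    have hmul := hind.measure_inter_preimage_eq_mul (Set.Iic x ×ˢ ({n} : Set ℕ))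
      {h : ℕ → ℝ | ∀ j ∈ Finset.range n, h j ≤ x}
      (measurableSet_Iic.prod (MeasurableSet.singleton n)) hBmeas
    rw [hpreim1, hmul, hAeq, hBeq]
    have hBeq2 : (⋂ j ∈ Finset.range n, {ω | Hs j ω ≤ x})
        = ⋂ j ∈ Finset.range n, Hs j ⁻¹' Set.Iic x := rfl
    have hiid := hHsiid.measure_inter_preimage_eq_mul (S := Finset.range n)
      (sets := fun _ => Set.Iic x) (fun i _ => measurableSet_Iic)
    rw [hBeq2, hiid]
    have hQj : ∀ j : ℕ, P (Hs j ⁻¹' Set.Iic x) = Q := fun j =>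
      (hHsid j).measure_mem_eq (s := Set.Iic x) measurableSet_Iic
    rw [Finset.prod_congr rfl (fun j _ => hQj j), Finset.prod_const, Finset.card_range]
  have hPU : P (⋃ n, En n) = ∑' n, p n * Q ^ n := by
    rw [measure_iUnion hEdisj msEn]
    exact tsum_congr hPEn
  have hPX : P {ω | X ω ≤ x} = ∑' n, p n := by
    have heq : {ω | X ω ≤ x} = ⋃ n, {ω | X ω ≤ x ∧ Lnum ω = n} := by
      ext ω; simp
    have hd : Pairwise (Function.onFun Disjoint (fun n => {ω | X ω ≤ x ∧ Lnum ω = n})) := by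
      intro m n hmn
      refine Set.disjoint_left.2 (fun ω hm hn => hmn ?_)
      exact hm.2.symm.trans hn.2
    rw [heq, measure_iUnion hd
      (fun n => show MeasurableSet {ω | X ω ≤ x ∧ Lnum ω = n} from msXle.inter (msLn n))]
  have hcomplX : S + P {ω | X ω ≤ x} = 1 := by
    have heq : {ω | X ω ≤ x} = {ω | x < X ω}ᶜ := by ext ω; simp
    rw [hS, heq, measure_add_measure_compl msXgt]
    exact measure_univ
  have hQT : Q + T = 1 := by
    have heq : {ω | x < H ω} = {ω | H ω ≤ x}ᶜ := by ext ω; simp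
    rw [hQ, hT, heq, measure_add_measure_compl msHle]
    exact measure_univ
  have hQle : Q ≤ 1 := prob_le_one
  have hsplit : ∀ n : ℕ, p n = p n * Q ^ n + p n * (T * ∑ i ∈ Finset.range n, Q ^ i) := by
    intro n
    rw [← mul_add, geom_aux Q T hQT n, mul_one]
  have hsum : (∑' n, p n)
      = (∑' n, p n * Q ^ n) + ∑' n, p n * (T * ∑ i ∈ Finset.range n, Q ^ i) := by
    rw [← ENNReal.tsum_add]
    exact tsum_congr hsplit
  have hgsum : ∀ i : ℕ, (∑' n, (if i < n then p n else 0)) = g i := by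
    intro i
    set C : ℕ → Set Ω := fun n => if i < n then {ω | X ω ≤ x ∧ Lnum ω = n} else ∅ with hC
    have hCm : ∀ n, MeasurableSet (C n) := by
      intro n; simp only [hC]; split_ifs
      · exact show MeasurableSet {ω | X ω ≤ x ∧ Lnum ω = n} from msXle.inter (msLn n)
      · exact MeasurableSet.empty
    have hCd : Pairwise (Function.onFun Disjoint C) := by
      intro m n hmn
      refine Set.disjoint_left.2 (fun ω hm hn => hmn ?_)
      simp only [hC] at hm hn
      by_cases h1 : i < m
      · by_cases h2 : i < n
        · rw [if_pos h1] at hm; rw [if_pos h2] at hn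
          exact hm.2.symm.trans hn.2
        · rw [if_neg h2] at hn; exact absurd hn (Set.notMem_empty ω)
      · rw [if_neg h1] at hm; exact absurd hm (Set.notMem_empty ω)
    have hCU : (⋃ n, C n) = {ω | X ω ≤ x} ∩ {ω | i < Lnum ω} := by
      ext ω
      simp only [Set.mem_iUnion, hC, Set.mem_inter_iff, Set.mem_setOf_eq]
      constructor
      · rintro ⟨n, hn⟩
        by_cases h1 : i < n
        · rw [if_pos h1] at hn; exact ⟨hn.1, by rw [hn.2]; exact h1⟩
        · rw [if_neg h1] at hn; exact absurd hn (Set.notMem_empty ω)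
      · rintro ⟨h1, h2⟩
        exact ⟨Lnum ω, by rw [if_pos h2]; exact ⟨h1, rfl⟩⟩
    show (∑' n, (if i < n then p n else 0)) = P ({ω | X ω ≤ x} ∩ {ω | i < Lnum ω})
    rw [← hCU, measure_iUnion hCd hCm]
    refine tsum_congr (fun n => ?_)
    by_cases h1 : i < n
    · simp only [hC]; rw [if_pos h1, if_pos h1]
    · simp only [hC]; rw [if_neg h1, if_neg h1]; exact measure_empty.symm
  have hR : (∑' n, p n * (T * ∑ i ∈ Finset.range n, Q ^ i)) = T * ∑' i, Q ^ i * g i := by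
    calc ∑' n, p n * (T * ∑ i ∈ Finset.range n, Q ^ i)
        = ∑' n, T * ∑' i, (if i < n then p n * Q ^ i else 0) := by
          refine tsum_congr (fun n => ?_)
          have h1 := tsum_eq_sum (L := SummationFilter.unconditional ℕ) (s := Finset.range n)
            (f := fun i => if i < n then p n * Q ^ i else 0)
            (by intro i hi; rw [Finset.mem_range] at hi; exact if_neg hi)
          rw [h1, Finset.sum_congr rfl (fun i hi => if_pos (Finset.mem_range.1 hi)),
            ← Finset.mul_sum]
          ring
      _ = T * ∑' n, ∑' i, (if i < n then p n * Q ^ i else 0) := by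
          rw [ENNReal.tsum_mul_left]
      _ = T * ∑' i, ∑' n, (if i < n then p n * Q ^ i else 0) := by
          rw [ENNReal.tsum_comm]
      _ = T * ∑' i, Q ^ i * ∑' n, (if i < n then p n else 0) := by
          congr 1
          refine tsum_congr (fun i => ?_)
          rw [← ENNReal.tsum_mul_left]
          refine tsum_congr (fun n => ?_)
          by_cases h1 : i < n
          · rw [if_pos h1, if_pos h1]; ring
          · rw [if_neg h1, if_neg h1, mul_zero]
      _ = T * ∑' i, Q ^ i * g i := by
          congr 1
          exact tsum_congr (fun i => by rw [hgsum i])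
  have hfin : (∑' n, p n * Q ^ n) ≠ ∞ := by
    refine ne_top_of_le_ne_top (?_ : (1:ℝ≥0∞) ≠ ⊤) ?_
    · exact ENNReal.one_ne_top
    calc (∑' n, p n * Q ^ n) ≤ ∑' n, p n := by
          refine ENNReal.tsum_le_tsum (fun n => ?_)
          calc p n * Q ^ n ≤ p n * 1 := mul_le_mul_right (pow_le_one' hQle n) (p n)
            _ = p n := mul_one _
      _ = P {ω | X ω ≤ x} := hPX.symm
      _ ≤ 1 := prob_le_one
  have hmain : (∑' n, p n * Q ^ n) + T
      = (∑' n, p n * Q ^ n) + (S + T * ∑' i, Q ^ i * g i) := by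
    calc (∑' n, p n * Q ^ n) + T = T + ∑' n, p n * Q ^ n := add_comm _ _
      _ = 1 := by rw [← hPU]; exact hcompl
      _ = S + P {ω | X ω ≤ x} := hcomplX.symm
      _ = S + ((∑' n, p n * Q ^ n) + ∑' n, p n * (T * ∑ i ∈ Finset.range n, Q ^ i)) := by
          rw [hPX, hsum]
      _ = S + ((∑' n, p n * Q ^ n) + T * ∑' i, Q ^ i * g i) := by rw [hR]
      _ = (∑' n, p n * Q ^ n) + (S + T * ∑' i, Q ^ i * g i) := by ring
  exact (ENNReal.add_right_inj hfin).1 hmain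

private lemma tsum_ite_lt (m : ℕ) : ∑' i : ℕ, (if i < m then (1:ℝ≥0∞) else 0) = m := by
  rw [tsum_eq_sum (s := Finset.range m) (by intro i hi; simp [Finset.mem_range] at hi; simp [hi])]
  rw [Finset.sum_ite_of_true (by intro i hi; exact Finset.mem_range.1 hi)]
  simp

private lemma lintegral_nat {Ω : Type*} [MeasurableSpace Ω] (P : Measure Ω)
    (Lnum : Ω → ℕ) (hL : Measurable Lnum) :
    ∫⁻ ω, (Lnum ω : ℝ≥0∞) ∂P = ∑' i : ℕ, P {ω | i < Lnum ω} := by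
  have msi : ∀ i : ℕ, MeasurableSet {ω | i < Lnum ω} := fun i => hL measurableSet_Ioi
  have h1 : ∀ ω, (Lnum ω : ℝ≥0∞)
      = ∑' i : ℕ, Set.indicator {ω' | i < Lnum ω'} (fun _ => (1:ℝ≥0∞)) ω := by
    intro ω
    rw [tsum_congr (fun i => show Set.indicator {ω' | i < Lnum ω'} (fun _ => (1:ℝ≥0∞)) ω
      = if i < Lnum ω then (1:ℝ≥0∞) else 0 from by
        by_cases h : i < Lnum ω <;> simp [Set.indicator_apply, h])]
    exact (tsum_ite_lt (Lnum ω)).symm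
  calc ∫⁻ ω, (Lnum ω : ℝ≥0∞) ∂P
      = ∫⁻ ω, ∑' i : ℕ, Set.indicator {ω' | i < Lnum ω'} (fun _ => (1:ℝ≥0∞)) ω ∂P :=
        lintegral_congr h1
    _ = ∑' i : ℕ, ∫⁻ ω, Set.indicator {ω' | i < Lnum ω'} (fun _ => (1:ℝ≥0∞)) ω ∂P :=
        lintegral_tsum (fun i => (measurable_const.indicator (msi i)).aemeasurable)
    _ = ∑' i : ℕ, P {ω | i < Lnum ω} :=
        tsum_congr (fun i => lintegral_indicator_one (msi i))

/-- Tail asymptotics for the maximum of the marks of a generic cluster in the Hawkes process: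
`H =d max(X, max_{1≤j≤L} H_j)` implies `P(H > x) ∼ P(X > x)/(1 - E[L])`, and `H` is
regularly varying with the same index. -/
theorem tail_max_hawkes
    {Ω : Type*} [MeasurableSpace Ω] (P : Measure Ω) [IsProbabilityMeasure P]
    (α : ℝ) (hα : 1 < α)
    (X : Ω → ℝ) (Lnum : Ω → ℕ)
    (hXmeas : Measurable X) (hLmeas : Measurable Lnum)
    (hXnn : ∀ ω, 0 ≤ X ω)
    (hXrv : RegVarying P X α)
    (hLint : Integrable (fun ω => (Lnum ω : ℝ)) P)
    (hEL : ∫ ω, (Lnum ω : ℝ) ∂P < 1)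
    (H : Ω → ℝ) (Hs : ℕ → Ω → ℝ)
    (hHmeas : Measurable H) (hHsmeas : ∀ j, Measurable (Hs j))
    (hHnn : ∀ ω, 0 ≤ H ω) (hHsnn : ∀ j ω, 0 ≤ Hs j ω)
    (hHsid : ∀ j, IdentDistrib (Hs j) H P P)
    (hHsiid : iIndepFun Hs P)
    (hind : IndepFun (fun ω => (X ω, Lnum ω)) (fun ω j => Hs j ω) P)
    (hfix : IdentDistrib H (fun ω => max (X ω) (⨆ j : Fin (Lnum ω), Hs (j : ℕ) ω)) P P) :
    Tendsto (fun x => tailP P H x / tailP P X x) atTop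
      (𝓝 (1 / (1 - ∫ ω, (Lnum ω : ℝ) ∂P))) ∧
    RegVarying P H α := by
  classical
  obtain ⟨LX, hLXmeas, ⟨hLXpos, hLXslow⟩, hLXeq⟩ := hXrv
  set l := ∫ ω, (Lnum ω : ℝ) ∂P with hl
  set Q : ℝ → ℝ≥0∞ := fun x => P {ω | H ω ≤ x} with hQ
  set g : ℕ → ℝ → ℝ≥0∞ := fun i x => P ({ω | X ω ≤ x} ∩ {ω | i < Lnum ω}) with hg
  set A : ℝ → ℝ≥0∞ := fun x => ∑' i : ℕ, Q x ^ i * g i x with hA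
  set EL : ℝ≥0∞ := ∑' i : ℕ, P {ω | i < Lnum ω} with hEL2
  have key : ∀ x : ℝ, 0 < x →
      P {ω | x < H ω} = P {ω | x < X ω} + P {ω | x < H ω} * A x :=
    fun x hx => key_identity P X Lnum hXmeas hLmeas H Hs hHmeas hHsmeas hHsid hHsiid hind hfix x hx
  have hELfin : EL ≠ ∞ := by
    have h2 : (∫⁻ ω, ((‖(Lnum ω : ℝ)‖₊ : ℝ≥0) : ℝ≥0∞) ∂P) < ∞ := hLint.2
    have h3 : ∀ ω, ((‖(Lnum ω : ℝ)‖₊ : ℝ≥0) : ℝ≥0∞) = (Lnum ω : ℝ≥0∞) := by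
      intro ω; rw [Real.nnnorm_natCast]; exact ENNReal.coe_natCast _
    rw [lintegral_congr h3, lintegral_nat P Lnum hLmeas] at h2
    exact h2.ne
  have hELtoReal : EL.toReal = l := by
    have h0 : 0 ≤ᵐ[P] fun ω => ((Lnum ω : ℝ)) :=
      Filter.Eventually.of_forall (fun ω => Nat.cast_nonneg _)
    rw [hl, integral_eq_lintegral_of_nonneg_ae h0 hLint.1]
    congr 1
    rw [hEL2, ← lintegral_nat P Lnum hLmeas]
    exact lintegral_congr (fun ω => (ENNReal.ofReal_natCast _).symm)
  have hEL1 : EL < 1 := by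
    rw [← ENNReal.ofReal_one, ENNReal.lt_ofReal_iff_toReal_lt hELfin, hELtoReal]
    exact hEL
  have hgle : ∀ i x, g i x ≤ P {ω | i < Lnum ω} := fun i x =>
    measure_mono Set.inter_subset_right
  have hQle1 : ∀ x, Q x ≤ 1 := fun x => prob_le_one
  have hAle : ∀ x, A x ≤ EL := by
    intro x
    refine ENNReal.tsum_le_tsum (fun i => ?_)
    calc Q x ^ i * g i x ≤ 1 * P {ω | i < Lnum ω} :=
          mul_le_mul' (pow_le_one' (hQle1 x) i) (hgle i x)
      _ = _ := one_mul _
  have hAfin : ∀ x, A x ≠ ∞ := fun x => ne_top_of_le_ne_top hELfin (hAle x)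
  have hQmono : Monotone Q := fun x y hxy => measure_mono (fun ω h => le_trans h hxy)
  have hgmono : ∀ i, Monotone (g i) := fun i x y hxy =>
    measure_mono (fun ω h => ⟨le_trans h.1 hxy, h.2⟩)
  have hAmono : Monotone A := fun x y hxy =>
    ENNReal.tsum_le_tsum (fun i => mul_le_mul' (pow_le_pow_left' (hQmono hxy) i)
      (hgmono i hxy))
  have hQlim : Tendsto Q atTop (𝓝 1) := by
    have hmono : Monotone (fun x : ℝ => {ω | H ω ≤ x}) := fun x y hxy ω h => le_trans h hxy
    have h2 := tendsto_measure_iUnion_atTop (μ := P) hmono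
    have hU : (⋃ x : ℝ, {ω | H ω ≤ x}) = Set.univ := by
      ext ω
      simp only [Set.mem_iUnion, Set.mem_setOf_eq, Set.mem_univ, iff_true]
      exact ⟨H ω, le_refl _⟩
    rw [hU, measure_univ] at h2
    exact h2
  have hglim : ∀ i, Tendsto (g i) atTop (𝓝 (P {ω | i < Lnum ω})) := by
    intro i
    have hmono : Monotone (fun x : ℝ => {ω | X ω ≤ x} ∩ {ω | i < Lnum ω}) :=
      fun x y hxy ω h => ⟨le_trans h.1 hxy, h.2⟩
    have h2 := tendsto_measure_iUnion_atTop (μ := P) hmono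
    have hU : (⋃ x : ℝ, {ω | X ω ≤ x} ∩ {ω | i < Lnum ω}) = {ω | i < Lnum ω} := by
      ext ω
      simp only [Set.mem_iUnion, Set.mem_inter_iff, Set.mem_setOf_eq]
      constructor
      · rintro ⟨x, _, h⟩; exact h
      · intro h; exact ⟨X ω, le_refl _, h⟩
    rw [hU] at h2
    exact h2
  have hAlim : Tendsto A atTop (𝓝 EL) := by
    have h1 := tendsto_atTop_iSup hAmono
    have h2 : (⨆ x, A x) = EL := by
      refine le_antisymm (iSup_le hAle) ?_
      rw [hEL2, ENNReal.tsum_eq_iSup_sum]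
      refine iSup_le (fun s => ?_)
      have hfs : Tendsto (fun x => ∑ i ∈ s, Q x ^ i * g i x) atTop
          (𝓝 (∑ i ∈ s, P {ω | i < Lnum ω})) := by
        refine tendsto_finset_sum s (fun i _ => ?_)
        have hpow : Tendsto (fun x => Q x ^ i) atTop (𝓝 1) := by
          simpa using (ENNReal.Tendsto.pow (n := i) hQlim)
        have h3 := ENNReal.Tendsto.mul hpow (Or.inr (measure_ne_top P _)) (hglim i)
          (Or.inr ENNReal.one_ne_top)
        simpa using h3
      refine le_of_tendsto hfs (Filter.Eventually.of_forall (fun x => ?_))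
      calc ∑ i ∈ s, Q x ^ i * g i x ≤ A x := ENNReal.sum_le_tsum s
        _ ≤ ⨆ y, A y := le_iSup A x
    rwa [h2] at h1
  set a : ℝ → ℝ := fun x => (A x).toReal with ha
  have halim : Tendsto a atTop (𝓝 l) := by
    have h2 := (ENNReal.tendsto_toReal hELfin).comp hAlim
    rwa [hELtoReal] at h2
  have hale : ∀ x, a x ≤ l := by
    intro x
    rw [← hELtoReal]
    exact ENNReal.toReal_mono hELfin (hAle x)
  have hanneg : ∀ x, 0 ≤ a x := fun x => ENNReal.toReal_nonneg
  have hl1 : l < 1 := hEL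
  have hkeyR : ∀ x : ℝ, 0 < x →
      tailP P H x = tailP P X x + tailP P H x * a x := by
    intro x hx
    have h1 := key x hx
    have hTfin : P {ω | x < H ω} ≠ ∞ := measure_ne_top P _
    have hSfin : P {ω | x < X ω} ≠ ∞ := measure_ne_top P _
    calc tailP P H x = (P {ω | x < H ω}).toReal := rfl
      _ = (P {ω | x < X ω} + P {ω | x < H ω} * A x).toReal := by rw [← h1]
      _ = tailP P X x + tailP P H x * a x := by
          rw [ENNReal.toReal_add hSfin (ENNReal.mul_ne_top hTfin (hAfin x)),
            ENNReal.toReal_mul]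
          rfl
  have hspos : ∀ x : ℝ, 0 < x → 0 < tailP P X x := by
    intro x hx
    rw [hLXeq x hx]
    exact mul_pos (Real.rpow_pos_of_pos hx _) (hLXpos x hx)
  have h1apos : ∀ x, 0 < 1 - a x := fun x => by have := hale x; linarith
  have htpos : ∀ x : ℝ, 0 < x → 0 < tailP P H x := by
    intro x hx
    have h1 := hkeyR x hx
    have h2 : 0 ≤ tailP P H x * a x := mul_nonneg ENNReal.toReal_nonneg (hanneg x)
    have h3 := hspos x hx
    linarith
  have hteq : ∀ x : ℝ, 0 < x → tailP P H x * (1 - a x) = tailP P X x := by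
    intro x hx
    linear_combination (hkeyR x hx)
  have hratio : ∀ x : ℝ, 0 < x → tailP P H x / tailP P X x = 1 / (1 - a x) := by
    intro x hx
    have ht := (htpos x hx).ne'
    have h1a := (h1apos x).ne'
    rw [← hteq x hx]
    field_simp
  constructor
  · have hlim2 : Tendsto (fun x => 1 / (1 - a x)) atTop (𝓝 (1 / (1 - l))) := by
      refine Tendsto.div tendsto_const_nhds (tendsto_const_nhds.sub halim) ?_
      intro h; rw [sub_eq_zero] at h; exact absurd h.symm (ne_of_lt hl1)
    refine Tendsto.congr' ?_ hlim2
    filter_upwards [eventually_gt_atTop (0:ℝ)] with x hx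
    exact (hratio x hx).symm
  · have hform : ∀ y : ℝ, 0 < y → y ^ α * tailP P H y = LX y / (1 - a y) := by
      intro y hy
      have ht2 : tailP P H y = tailP P X y / (1 - a y) :=
        (eq_div_iff (h1apos y).ne').2 (hteq y hy)
      have hpow : y ^ α * y ^ (-α) = 1 := by
        rw [← Real.rpow_add hy]; simp
      rw [ht2, hLXeq y hy]
      calc y ^ α * (y ^ (-α) * LX y / (1 - a y))
          = (y ^ α * y ^ (-α)) * (LX y / (1 - a y)) := by ring
        _ = LX y / (1 - a y) := by rw [hpow, one_mul]
    refine ⟨fun x => x ^ α * tailP P H x, ?_, ⟨?_, ?_⟩, ?_⟩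
    · have hanti : Antitone (fun x => tailP P H x) := fun x y hxy =>
        ENNReal.toReal_mono (measure_ne_top P _)
          (measure_mono (fun ω h => lt_of_le_of_lt hxy h))
      exact ((Real.continuous_rpow_const (by linarith : (0:ℝ) ≤ α)).measurable).mul
        hanti.measurable
    · intro x hx
      exact mul_pos (Real.rpow_pos_of_pos hx α) (htpos x hx)
    · intro c hc
      have hccomp : Tendsto (fun x : ℝ => c * x) atTop atTop :=
        Tendsto.const_mul_atTop hc tendsto_id
      have halim2 : Tendsto (fun x => a (c * x)) atTop (𝓝 l) := halim.comp hccomp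
      have hne : (1:ℝ) - l ≠ 0 := by linarith
      have hfrac : Tendsto (fun x => (1 - a x) / (1 - a (c * x))) atTop (𝓝 1) := by
        have hb1 : Tendsto (fun x => 1 - a x) atTop (𝓝 (1 - l)) :=
          (tendsto_const_nhds : Tendsto (fun _ : ℝ => (1:ℝ)) atTop _).sub halim
        have hb2 : Tendsto (fun x => 1 - a (c * x)) atTop (𝓝 (1 - l)) :=
          (tendsto_const_nhds : Tendsto (fun _ : ℝ => (1:ℝ)) atTop _).sub halim2
        have h2 : Tendsto (fun x => (1 - a x) / (1 - a (c * x))) atTop (𝓝 ((1 - l) / (1 - l))) :=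
          Tendsto.div hb1 hb2 hne
        simpa [div_self hne] using h2
      have hmain := (hLXslow c hc).mul hfrac
      rw [mul_one] at hmain
      refine Tendsto.congr' ?_ hmain
      filter_upwards [eventually_gt_atTop (0:ℝ)] with x hx
      have hcx : 0 < c * x := mul_pos hc hx
      show LX (c * x) / LX x * ((1 - a x) / (1 - a (c * x)))
        = (c * x) ^ α * tailP P H (c * x) / (x ^ α * tailP P H x)
      rw [hform x hx, hform (c * x) hcx]
      have hLXx := (hLXpos x hx).ne'
      have hLXcx := (hLXpos (c * x) hcx).ne'
      have h1 := (h1apos x).ne'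
      have h2 := (h1apos (c * x)).ne'
      field_simp
    · intro x hx
      have hpow : x ^ (-α) * x ^ α = 1 := by
        rw [← Real.rpow_add hx]; simp
      rw [← mul_assoc, hpow, one_mul]
end

section
/- Let (X, κ) be a pair of nonnegative random variables, jointly regularly varying with noninteger index α > 1, with slowly varying function L and limit function w. Let N ∈ ℕ-valued be conditionally Poisson with parameter κ given (X, κ). Then for all t₁, t₂ ≥ 0, lim_{x→∞} P(t₁X + t₂N > x)/(x^{-α}L(x)) = w(t₁,t₂); consequently the pair (X, N) is jointly regularly varying with the same index α and the same limit function w. -/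
open MeasureTheory ProbabilityTheory Filter Topology Asymptotics

/-- A pair `(X, K)` of nonnegative random variables is jointly regularly varying with index `α`,
slowly varying function `L` and limit function `w` if for all `t₁, t₂ ≥ 0`,
`P(t₁X + t₂K > x)/(x^{-α}L(x)) → w(t₁,t₂)`, with `w(t₁,t₂) > 0` for at least one pair. -/
def JointRegVarying {Ω : Type*} [MeasurableSpace Ω] (P : Measure Ω)
    (X K : Ω → ℝ) (α : ℝ) (L : ℝ → ℝ) (w : ℝ → ℝ → ℝ) : Prop :=
  Measurable L ∧ SlowlyVarying L ∧
  (∀ t₁ ≥ (0 : ℝ), ∀ t₂ ≥ (0 : ℝ),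
    Tendsto (fun x => tailP P (fun ω => t₁ * X ω + t₂ * K ω) x / (x ^ (-α) * L x))
      atTop (𝓝 (w t₁ t₂))) ∧
  (∃ t₁ ≥ (0 : ℝ), ∃ t₂ ≥ (0 : ℝ), 0 < w t₁ t₂)

/-- `N` is conditionally Poisson with parameter `κ` given `(X, κ)`:
`E[1_{N = k} | σ(X, κ)] = κ^k e^{-κ}/k!` a.s. for every `k`. -/
def CondPoisson {Ω : Type*} [MeasurableSpace Ω] (P : Measure Ω)
    (X κ : Ω → ℝ) (N : Ω → ℕ) : Prop :=
  ∀ k : ℕ,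
    P[(fun ω => if N ω = k then (1 : ℝ) else 0) |
        MeasurableSpace.comap (fun ω => (X ω, κ ω)) inferInstance]
      =ᵐ[P] fun ω => κ ω ^ k * Real.exp (-κ ω) / (Nat.factorial k : ℝ)


set_option linter.unusedSectionVars false

section Aux

variable {Ω : Type*} [MeasurableSpace Ω] (P : Measure Ω) [IsProbabilityMeasure P]

lemma tailP_nonneg (Z : Ω → ℝ) (x : ℝ) : 0 ≤ tailP P Z x := ENNReal.toReal_nonneg

lemma tailP_mono {Z₁ Z₂ : Ω → ℝ} (h : ∀ ω, Z₁ ω ≤ Z₂ ω) (x : ℝ) :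
    tailP P Z₁ x ≤ tailP P Z₂ x := by
  refine ENNReal.toReal_mono (measure_ne_top P _) ?_
  exact measure_mono fun ω hω => lt_of_lt_of_le hω (h ω)

lemma tailP_anti (Z : Ω → ℝ) {x y : ℝ} (h : x ≤ y) : tailP P Z y ≤ tailP P Z x := by
  refine ENNReal.toReal_mono (measure_ne_top P _) ?_
  exact measure_mono fun ω hω => lt_of_le_of_lt h hω

lemma tailP_scale (X K : Ω → ℝ) (a b : ℝ) {c : ℝ} (hc : 0 < c) (x : ℝ) :
    tailP P (fun ω => (a / c) * X ω + (b / c) * K ω) x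
      = tailP P (fun ω => a * X ω + b * K ω) (c * x) := by
  unfold tailP
  congr 2
  ext ω
  simp only [Set.mem_setOf_eq]
  rw [div_mul_eq_mul_div, div_mul_eq_mul_div, ← add_div, lt_div_iff₀ hc, mul_comm]

end Aux

section Phi

variable {α : ℝ} {L : ℝ → ℝ}

lemma phi_pos (hL : SlowlyVarying L) : ∀ x > 0, 0 < x ^ (-α) * L x :=
  fun x hx => mul_pos (Real.rpow_pos_of_pos hx _) (hL.1 x hx)

lemma phi_ratio (hL : SlowlyVarying L) {c : ℝ} (hc : 0 < c) :
    Tendsto (fun x => ((c * x) ^ (-α) * L (c * x)) / (x ^ (-α) * L x)) atTop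
      (𝓝 (c ^ (-α))) := by
  have h := (hL.2 c hc).const_mul (c ^ (-α) : ℝ)
  rw [mul_one] at h
  refine h.congr' ?_
  filter_upwards [eventually_gt_atTop (0 : ℝ)] with x hx
  have hLx : L x ≠ 0 := (hL.1 x hx).ne'
  have hxα : x ^ (-α) ≠ 0 := (Real.rpow_pos_of_pos hx _).ne'
  rw [Real.mul_rpow hc.le hx.le]
  field_simp

end Phi

section W

variable {Ω : Type*} [MeasurableSpace Ω] {P : Measure Ω} [IsProbabilityMeasure P]
  {α : ℝ} {X κ : Ω → ℝ} {L : ℝ → ℝ} {w : ℝ → ℝ → ℝ}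

lemma w_nonneg (hjrv : JointRegVarying P X κ α L w) {a b : ℝ} (ha : 0 ≤ a) (hb : 0 ≤ b) :
    0 ≤ w a b := by
  refine ge_of_tendsto (hjrv.2.2.1 a ha b hb) ?_
  filter_upwards [eventually_gt_atTop (0 : ℝ)] with x hx
  exact div_nonneg (tailP_nonneg P _ x) (phi_pos hjrv.2.1 x hx).le

lemma w_mono (hjrv : JointRegVarying P X κ α L w)
    (hXnn : ∀ ω, 0 ≤ X ω) (hκnn : ∀ ω, 0 ≤ κ ω)
    {a a' b b' : ℝ} (ha : 0 ≤ a) (haa : a ≤ a') (hb : 0 ≤ b) (hbb : b ≤ b') :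
    w a b ≤ w a' b' := by
  refine le_of_tendsto_of_tendsto (hjrv.2.2.1 a ha b hb)
    (hjrv.2.2.1 a' (ha.trans haa) b' (hb.trans hbb)) ?_
  filter_upwards [eventually_gt_atTop (0 : ℝ)] with x hx
  have hnum : tailP P (fun ω => a * X ω + b * κ ω) x
      ≤ tailP P (fun ω => a' * X ω + b' * κ ω) x := by
    refine tailP_mono P (fun ω => ?_) x
    have h1 : a * X ω ≤ a' * X ω := mul_le_mul_of_nonneg_right haa (hXnn ω)
    have h2 : b * κ ω ≤ b' * κ ω := mul_le_mul_of_nonneg_right hbb (hκnn ω)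
    linarith
  have hd := phi_pos (α := α) hjrv.2.1 x hx
  gcongr

lemma w_homog (hjrv : JointRegVarying P X κ α L w) {a b c : ℝ}
    (ha : 0 ≤ a) (hb : 0 ≤ b) (hc : 0 < c) :
    w (a / c) (b / c) = c ^ (-α) * w a b := by
  have h1 : Tendsto (fun x => tailP P (fun ω => (a / c) * X ω + (b / c) * κ ω) x
      / (x ^ (-α) * L x)) atTop (𝓝 (w (a / c) (b / c))) :=
    hjrv.2.2.1 _ (div_nonneg ha hc.le) _ (div_nonneg hb hc.le)
  have hcomp : Tendsto (fun x : ℝ => c * x) atTop atTop :=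
    Tendsto.const_mul_atTop hc tendsto_id
  have hA : Tendsto (fun x => tailP P (fun ω => a * X ω + b * κ ω) (c * x)
      / ((c * x) ^ (-α) * L (c * x))) atTop (𝓝 (w a b)) :=
    (hjrv.2.2.1 a ha b hb).comp hcomp
  have h2 : Tendsto (fun x => tailP P (fun ω => (a / c) * X ω + (b / c) * κ ω) x
      / (x ^ (-α) * L x)) atTop (𝓝 (w a b * c ^ (-α))) := by
    refine (hA.mul (phi_ratio hjrv.2.1 hc)).congr' ?_
    filter_upwards [eventually_gt_atTop (0 : ℝ)] with x hx
    have hcx : (0 : ℝ) < c * x := mul_pos hc hx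
    have hφcx : ((c * x) ^ (-α) * L (c * x)) ≠ 0 := (phi_pos hjrv.2.1 _ hcx).ne'
    rw [div_mul_div_comm, tailP_scale P X κ a b hc x, mul_comm (tailP P _ _),
      mul_div_mul_left _ _ hφcx]
  rw [mul_comm] at h2
  exact tendsto_nhds_unique h1 h2

lemma w_homog' (hjrv : JointRegVarying P X κ α L w) {a b c : ℝ}
    (ha : 0 ≤ a) (hb : 0 ≤ b) (hc : 0 < c) :
    w (c * a) (c * b) = c ^ α * w a b := by
  have h := w_homog hjrv (mul_nonneg hc.le ha) (mul_nonneg hc.le hb) hc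
  rw [mul_div_cancel_left₀ _ hc.ne', mul_div_cancel_left₀ _ hc.ne'] at h
  rw [h, ← mul_assoc, ← Real.rpow_add hc, add_neg_cancel, Real.rpow_zero, one_mul]

lemma exp_rpow_zero {c : ℝ} (γ : ℝ) (hc : 0 < c) :
    Tendsto (fun x => Real.exp (-c * x) * x ^ γ) atTop (𝓝 0) := by
  set n : ℕ := ⌈γ⌉₊
  have hn : Tendsto (fun x : ℝ => x ^ n * Real.exp (-x)) atTop (𝓝 0) :=
    Real.tendsto_pow_mul_exp_neg_atTop_nhds_zero n
  have hcomp : Tendsto (fun x : ℝ => c * x) atTop atTop :=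
    Tendsto.const_mul_atTop hc tendsto_id
  have h2 : Tendsto (fun x : ℝ => c⁻¹ ^ n * ((c * x) ^ n * Real.exp (-(c * x))))
      atTop (𝓝 0) := by
    simpa using (hn.comp hcomp).const_mul (c⁻¹ ^ n)
  refine squeeze_zero' ?_ ?_ h2
  · filter_upwards [eventually_gt_atTop (0 : ℝ)] with x hx
    exact mul_nonneg (Real.exp_pos _).le (Real.rpow_nonneg hx.le _)
  · filter_upwards [eventually_ge_atTop (1 : ℝ)] with x hx
    have hx0 : (0 : ℝ) < x := lt_of_lt_of_le one_pos hx
    have h3 : x ^ γ ≤ x ^ (n : ℝ) :=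
      Real.rpow_le_rpow_of_exponent_le hx (Nat.le_ceil γ)
    have h4 : x ^ (n : ℝ) = x ^ n := Real.rpow_natCast x n
    have h5 : c⁻¹ ^ n * ((c * x) ^ n * Real.exp (-(c * x)))
        = Real.exp (-c * x) * x ^ n := by
      rw [mul_pow, ← mul_assoc, ← mul_assoc, ← mul_pow, inv_mul_cancel₀ hc.ne',
        one_pow, one_mul, neg_mul]
      ring
    rw [h5]
    have := h3.trans_eq h4
    exact mul_le_mul_of_nonneg_left (h3.trans_eq h4) (Real.exp_pos _).le

lemma exp_negligible (hjrv : JointRegVarying P X κ α L w) (hα : 1 < α) {c : ℝ} (hc : 0 < c) :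
    Tendsto (fun x => Real.exp (-c * x) / (x ^ (-α) * L x)) atTop (𝓝 0) := by
  obtain ⟨s₁, hs₁, s₂, hs₂, hW⟩ := hjrv.2.2.2
  set W := w s₁ s₂ with hWdef
  set T₀ : ℝ → ℝ := fun x => tailP P (fun ω => s₁ * X ω + s₂ * κ ω) x with hT₀def
  have h1 : Tendsto (fun x => T₀ x / (x ^ (-α) * L x)) atTop (𝓝 W) :=
    hjrv.2.2.1 s₁ hs₁ s₂ hs₂
  have hφpos : ∀ x > (0:ℝ), 0 < x ^ (-α) * L x := phi_pos hjrv.2.1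
  -- eventual positivity and comparison
  have hT₀ev : ∀ᶠ x in atTop, 0 < T₀ x ∧ T₀ x / (2 * W) ≤ x ^ (-α) * L x := by
    filter_upwards [h1.eventually (eventually_gt_nhds (by linarith : W / 2 < W)),
      h1.eventually (eventually_lt_nhds (by linarith : W < 2 * W)),
      eventually_gt_atTop (0 : ℝ)] with x hlo hhi hx
    have hφ := hφpos x hx
    constructor
    · have h5 := (lt_div_iff₀ hφ).1 hlo
      nlinarith [hW]
    · have h6 := (div_lt_iff₀ hφ).1 hhi
      rw [div_le_iff₀ (by linarith : (0:ℝ) < 2 * W)]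
      nlinarith
  -- the ratio along doubling
  have hratio2 : Tendsto (fun x => T₀ (2 * x) / T₀ x) atTop (𝓝 ((2:ℝ) ^ (-α))) := by
    have hcomp : Tendsto (fun x : ℝ => 2 * x) atTop atTop :=
      Tendsto.const_mul_atTop two_pos tendsto_id
    have hA : Tendsto (fun x => T₀ (2 * x) / ((2 * x) ^ (-α) * L (2 * x))) atTop (𝓝 W) :=
      h1.comp hcomp
    have hB := phi_ratio (α := α) hjrv.2.1 two_pos
    have hC : Tendsto (fun x => (x ^ (-α) * L x) / T₀ x) atTop (𝓝 W⁻¹) := by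
      have := (h1.inv₀ hW.ne')
      refine this.congr fun x => ?_
      rw [inv_div]
    have hD := (hA.mul hB).mul hC
    have hval : W * (2:ℝ) ^ (-α) * W⁻¹ = (2:ℝ) ^ (-α) := by
      field_simp
    rw [hval] at hD
    refine hD.congr' ?_
    filter_upwards [hT₀ev, eventually_gt_atTop (0 : ℝ)] with x hx hx0
    have h2x : (0:ℝ) < 2 * x := by linarith
    have hφx := (hφpos x hx0).ne'
    have hφ2x := (hφpos _ h2x).ne'
    have hLx := (hjrv.2.1.1 x hx0).ne'
    have hL2x := (hjrv.2.1.1 _ h2x).ne'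
    have hTx := hx.1.ne'
    field_simp
  set r : ℝ := (2:ℝ) ^ (-(α + 1)) with hrdef
  have hr0 : 0 < r := Real.rpow_pos_of_pos two_pos _
  have hrlt : r < (2:ℝ) ^ (-α) :=
    Real.rpow_lt_rpow_of_exponent_lt one_lt_two (by linarith)
  have hrT : ∀ᶠ y in atTop, r * T₀ y ≤ T₀ (2 * y) ∧ 0 < T₀ y ∧
      T₀ y / (2 * W) ≤ y ^ (-α) * L y := by
    filter_upwards [hratio2.eventually (eventually_gt_nhds hrlt), hT₀ev] with y hy hev
    refine ⟨?_, hev.1, hev.2⟩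
    have := (lt_div_iff₀ hev.1).1 hy
    linarith
  obtain ⟨M₀, hM₀⟩ := eventually_atTop.1 hrT
  set M := max M₀ 1 with hMdef
  have hM1 : (1:ℝ) ≤ M := le_max_right _ _
  have hM0 : (0:ℝ) < M := lt_of_lt_of_le one_pos hM1
  have hMall : ∀ y ≥ M, r * T₀ y ≤ T₀ (2 * y) ∧ 0 < T₀ y ∧
      T₀ y / (2 * W) ≤ y ^ (-α) * L y :=
    fun y hy => hM₀ y (le_trans (le_max_left _ _) hy)
  have hTM : 0 < T₀ M := (hMall M le_rfl).2.1
  -- induction along powers of two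
  have hind : ∀ n : ℕ, T₀ M * r ^ n ≤ T₀ (M * 2 ^ n) := by
    intro n
    induction n with
    | zero => simp
    | succ n ih =>
      have hge : M * 2 ^ n ≥ M :=
        le_mul_of_one_le_right hM0.le (one_le_pow₀ one_le_two)
      have step := (hMall _ hge).1
      have harg : 2 * (M * 2 ^ n) = M * 2 ^ (n + 1) := by ring
      rw [harg] at step
      have : r * (T₀ M * r ^ n) ≤ r * T₀ (M * 2 ^ n) :=
        mul_le_mul_of_nonneg_left ih hr0.le
      calc T₀ M * r ^ (n + 1) = r * (T₀ M * r ^ n) := by ring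
      _ ≤ r * T₀ (M * 2 ^ n) := this
      _ ≤ T₀ (M * 2 ^ (n + 1)) := step
  -- polynomial lower bound for T₀
  have hlower : ∀ x ≥ M, T₀ M * r * (x / M) ^ (-(α + 1)) ≤ T₀ x := by
    intro x hx
    have hx0 : (0:ℝ) < x := lt_of_lt_of_le hM0 hx
    have hxM1 : (1:ℝ) ≤ x / M := (one_le_div hM0).2 hx
    have hxM0 : (0:ℝ) < x / M := lt_of_lt_of_le one_pos hxM1
    set n : ℕ := ⌊Real.logb 2 (x / M)⌋₊ with hndef
    have hlb0 : 0 ≤ Real.logb 2 (x / M) := Real.logb_nonneg one_lt_two hxM1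
    have h2n : (2:ℝ) ^ (n:ℝ) ≤ x / M := by
      calc (2:ℝ) ^ (n:ℝ) ≤ (2:ℝ) ^ (Real.logb 2 (x / M)) :=
        Real.rpow_le_rpow_of_exponent_le one_le_two (Nat.floor_le hlb0)
      _ = x / M := Real.rpow_logb two_pos (by norm_num) hxM0
    have h2n1 : x / M ≤ (2:ℝ) ^ ((n:ℝ) + 1) := by
      calc x / M = (2:ℝ) ^ (Real.logb 2 (x / M)) :=
        (Real.rpow_logb two_pos (by norm_num) hxM0).symm
      _ ≤ (2:ℝ) ^ ((n:ℝ) + 1) :=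
        Real.rpow_le_rpow_of_exponent_le one_le_two (Nat.lt_floor_add_one _).le
    have hxle : x ≤ M * 2 ^ (n + 1) := by
      have := (div_le_iff₀ hM0).1 h2n1
      calc x ≤ (2:ℝ) ^ ((n:ℝ) + 1) * M := this
      _ = M * 2 ^ (n + 1) := by
        rw [show ((n:ℝ) + 1) = ((n + 1 : ℕ) : ℝ) by push_cast; ring,
          Real.rpow_natCast]
        ring
    have hT1 : T₀ (M * 2 ^ (n + 1)) ≤ T₀ x := tailP_anti P _ hxle
    have hT2 := hind (n + 1)
    -- (x/M)^(-(α+1)) ≤ r^n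
    have hpow : (x / M) ^ (-(α + 1)) ≤ r ^ n := by
      have h8 : (x / M) ^ (-(α + 1)) ≤ ((2:ℝ) ^ (n:ℝ)) ^ (-(α + 1)) :=
        Real.rpow_le_rpow_of_nonpos (Real.rpow_pos_of_pos two_pos _) h2n
          (by linarith : -(α + 1) ≤ 0)
      have h9 : ((2:ℝ) ^ (n:ℝ)) ^ (-(α + 1)) = r ^ n := by
        rw [← Real.rpow_natCast r n, hrdef, ← Real.rpow_mul (by norm_num : (0:ℝ) ≤ 2),
          ← Real.rpow_mul (by norm_num : (0:ℝ) ≤ 2)]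
        ring_nf
      exact h8.trans_eq h9
    calc T₀ M * r * (x / M) ^ (-(α + 1)) ≤ T₀ M * r * r ^ n :=
      mul_le_mul_of_nonneg_left hpow (by positivity)
    _ = T₀ M * r ^ (n + 1) := by ring
    _ ≤ T₀ (M * 2 ^ (n + 1)) := hT2
    _ ≤ T₀ x := hT1
  -- conclude by squeezing
  set K : ℝ := 2 * W / (T₀ M * r * M ^ (α + 1)) with hKdef
  have hKpos : 0 < K := by
    have : (0:ℝ) < 2 * W := by linarith
    positivity
  have hsq : Tendsto (fun x => K * (Real.exp (-c * x) * x ^ (α + 1))) atTop (𝓝 0) := by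
    simpa using (exp_rpow_zero (α + 1) hc).const_mul K
  refine squeeze_zero' ?_ ?_ hsq
  · filter_upwards [eventually_gt_atTop (0 : ℝ)] with x hx
    exact div_nonneg (Real.exp_pos _).le (hφpos x hx).le
  · filter_upwards [eventually_ge_atTop M, eventually_ge_atTop (1:ℝ)] with x hxM hx1
    have hx0 : (0:ℝ) < x := lt_of_lt_of_le one_pos hx1
    have hφ := hφpos x hx0
    have hlow := hlower x hxM
    have hT₀x := (hMall x hxM).2.1
    have hφlow := (hMall x hxM).2.2
    -- exp(-cx)/φ(x) ≤ exp(-cx) * (2W) / T₀ x ≤ K exp(-cx) x^{α+1}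
    have hstep1 : Real.exp (-c * x) / (x ^ (-α) * L x)
        ≤ Real.exp (-c * x) / (T₀ x / (2 * W)) := by
      apply div_le_div_of_nonneg_left (Real.exp_pos _).le
      · exact div_pos hT₀x (by linarith)
      · exact hφlow
    have hWpos : (0:ℝ) < 2 * W := by linarith
    have hTMr : (0:ℝ) < T₀ M * r := by positivity
    have hpowpos : (0:ℝ) < (x / M) ^ (-(α + 1)) :=
      Real.rpow_pos_of_pos (by positivity) _
    have hstep2 : Real.exp (-c * x) / (T₀ x / (2 * W))
        ≤ Real.exp (-c * x) / (T₀ M * r * (x / M) ^ (-(α + 1)) / (2 * W)) := by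
      apply div_le_div_of_nonneg_left (Real.exp_pos _).le
      · exact div_pos (by positivity) hWpos
      · exact div_le_div_of_nonneg_right hlow hWpos.le
    have heq : Real.exp (-c * x) / (T₀ M * r * (x / M) ^ (-(α + 1)) / (2 * W))
        = K * (Real.exp (-c * x) * x ^ (α + 1)) := by
      have hxM0 : (0:ℝ) < x / M := by positivity
      have hMα : (0:ℝ) < M ^ (α + 1) := Real.rpow_pos_of_pos hM0 _
      have hxα : (0:ℝ) < x ^ (α + 1) := Real.rpow_pos_of_pos hx0 _
      rw [hKdef, Real.rpow_neg hxM0.le, Real.div_rpow hx0.le hM0.le]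
      field_simp
    calc Real.exp (-c * x) / (x ^ (-α) * L x)
        ≤ Real.exp (-c * x) / (T₀ x / (2 * W)) := hstep1
      _ ≤ Real.exp (-c * x) / (T₀ M * r * (x / M) ^ (-(α + 1)) / (2 * W)) := hstep2
      _ = K * (Real.exp (-c * x) * x ^ (α + 1)) := heq

end W

section PoisPointwise

lemma q_lt_one {δ : ℝ} (hδ : 0 < δ) : Real.exp (δ / (1 + δ)) / (1 + δ) < 1 := by
  have h1δ : (0:ℝ) < 1 + δ := by linarith
  rw [div_lt_one h1δ]
  have hu : (0:ℝ) < δ / (1 + δ) := by positivity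
  have h2 : 1 - δ / (1 + δ) < Real.exp (-(δ / (1 + δ))) := by
    have := Real.add_one_lt_exp (show -(δ / (1 + δ)) ≠ 0 by linarith)
    linarith
  have h3 : 1 - δ / (1 + δ) = 1 / (1 + δ) := by field_simp; ring
  have h4 : Real.exp (δ / (1 + δ)) * Real.exp (-(δ / (1 + δ))) = 1 := by
    rw [← Real.exp_add]; simp
  rw [h3] at h2
  have hgt : 1 < (1 + δ) * Real.exp (-(δ / (1 + δ))) := by
    calc (1:ℝ) = (1 + δ) * (1 / (1 + δ)) := by field_simp
    _ < _ := mul_lt_mul_of_pos_left h2 h1δ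
  nlinarith [Real.exp_pos (δ / (1 + δ))]

lemma c0_pos {δ : ℝ} (hδ0 : 0 < δ) (hδ1 : δ < 1) : 0 < δ + (1 - δ) * Real.log (1 - δ) := by
  have h1δ : (0:ℝ) < 1 - δ := by linarith
  have hu : (0:ℝ) < δ / (1 - δ) := by positivity
  have h2 : 1 + δ / (1 - δ) < Real.exp (δ / (1 - δ)) := by
    have := Real.add_one_lt_exp hu.ne'
    linarith
  have h3 : (1 - δ)⁻¹ = 1 + δ / (1 - δ) := by field_simp; ring
  have hlog : Real.log (1 - δ)⁻¹ < δ / (1 - δ) := by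
    rw [Real.log_lt_iff_lt_exp (by positivity), h3]
    exact h2
  rw [Real.log_inv] at hlog
  have h4 : (1 - δ) * (-Real.log (1 - δ)) < (1 - δ) * (δ / (1 - δ)) :=
    mul_lt_mul_of_pos_left (by linarith) h1δ
  have h5 : (1 - δ) * (δ / (1 - δ)) = δ := by field_simp
  nlinarith

lemma pois_pointwise_up {δ y : ℝ} (hδ : 0 < δ) (hy : 0 ≤ y) (k : ℕ)
    (hk : (1 + δ) * y ≤ k) :
    y ^ k * Real.exp (-y) / (Nat.factorial k : ℝ) ≤ (Real.exp (δ / (1 + δ)) / (1 + δ)) ^ k := by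
  have h1δ : (0:ℝ) < 1 + δ := by linarith
  have hfac : (0:ℝ) < (Nat.factorial k : ℝ) := by positivity
  have key : ((1 + δ) * y) ^ k / (Nat.factorial k : ℝ) ≤ Real.exp ((1 + δ) * y) := by
    have := Real.pow_div_factorial_le_exp (x := (1 + δ) * y) (by positivity) k
    simpa using this
  have h2 : y ^ k / (Nat.factorial k : ℝ)
      ≤ Real.exp ((1 + δ) * y) / (1 + δ) ^ k := by
    rw [div_le_div_iff₀ hfac (by positivity)]
    calc y ^ k * (1 + δ) ^ k = ((1 + δ) * y) ^ k := by rw [mul_pow]; ring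
    _ ≤ Real.exp ((1 + δ) * y) * (Nat.factorial k : ℝ) := by
        rw [div_le_iff₀ hfac] at key; exact key
  have h3 : y ^ k * Real.exp (-y) / (Nat.factorial k : ℝ)
      ≤ Real.exp ((1 + δ) * y) / (1 + δ) ^ k * Real.exp (-y) := by
    calc y ^ k * Real.exp (-y) / (Nat.factorial k : ℝ)
        = (y ^ k / (Nat.factorial k : ℝ)) * Real.exp (-y) := by ring
    _ ≤ Real.exp ((1 + δ) * y) / (1 + δ) ^ k * Real.exp (-y) :=
        mul_le_mul_of_nonneg_right h2 (Real.exp_pos _).le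
  refine h3.trans ?_
  have h4 : Real.exp ((1 + δ) * y) / (1 + δ) ^ k * Real.exp (-y)
      = Real.exp (δ * y) / (1 + δ) ^ k := by
    rw [div_mul_eq_mul_div, ← Real.exp_add]
    ring_nf
  rw [h4]
  have h5 : Real.exp (δ * y) ≤ Real.exp (δ / (1 + δ)) ^ k := by
    rw [← Real.exp_nat_mul]
    apply Real.exp_le_exp.2
    have : y ≤ k / (1 + δ) := by rw [le_div_iff₀ h1δ]; linarith
    calc δ * y ≤ δ * (k / (1 + δ)) := mul_le_mul_of_nonneg_left this hδ.le
    _ = (k : ℝ) * (δ / (1 + δ)) := by ring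
  calc Real.exp (δ * y) / (1 + δ) ^ k ≤ Real.exp (δ / (1 + δ)) ^ k / (1 + δ) ^ k :=
    div_le_div_of_nonneg_right h5 (by positivity : (0:ℝ) ≤ (1+δ)^k)
  _ = (Real.exp (δ / (1 + δ)) / (1 + δ)) ^ k := by rw [div_pow]

lemma pois_pointwise_low {δ y : ℝ} (hδ0 : 0 < δ) (hδ1 : δ < 1) (hy : 0 ≤ y) (k : ℕ)
    (hk : (k : ℝ) ≤ (1 - δ) * y) :
    y ^ k * Real.exp (-y) / (Nat.factorial k : ℝ)
      ≤ Real.exp (-((δ + (1 - δ) * Real.log (1 - δ)) * y)) := by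
  have h1δ : (0:ℝ) < 1 - δ := by linarith
  have hfac : (0:ℝ) < (Nat.factorial k : ℝ) := by positivity
  have hyδ : y / (1 - δ) = (1 - δ)⁻¹ * y := by ring
  have key : ((1 - δ) * y) ^ k / (Nat.factorial k : ℝ) ≤ Real.exp ((1 - δ) * y) := by
    have := Real.pow_div_factorial_le_exp (x := (1 - δ) * y) (by positivity) k
    simpa using this
  have h2 : y ^ k / (Nat.factorial k : ℝ)
      ≤ Real.exp ((1 - δ) * y) / (1 - δ) ^ k := by
    rw [div_le_div_iff₀ hfac (by positivity)]
    calc y ^ k * (1 - δ) ^ k = ((1 - δ) * y) ^ k := by rw [mul_pow]; ring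
    _ ≤ Real.exp ((1 - δ) * y) * (Nat.factorial k : ℝ) := by
        rw [div_le_iff₀ hfac] at key; exact key
  have h3 : y ^ k * Real.exp (-y) / (Nat.factorial k : ℝ)
      ≤ Real.exp ((1 - δ) * y) / (1 - δ) ^ k * Real.exp (-y) := by
    calc y ^ k * Real.exp (-y) / (Nat.factorial k : ℝ)
        = (y ^ k / (Nat.factorial k : ℝ)) * Real.exp (-y) := by ring
    _ ≤ _ := mul_le_mul_of_nonneg_right h2 (Real.exp_pos _).le
  refine h3.trans ?_
  -- (1-δ)^(-k) = exp(-k log(1-δ)) ≤ exp(-(1-δ) y log(1-δ)) since log(1-δ) < 0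
  have hlogneg : Real.log (1 - δ) < 0 := Real.log_neg h1δ (by linarith)
  have h6 : ((1 - δ) ^ k)⁻¹ = Real.exp (-(k * Real.log (1 - δ))) := by
    rw [← Real.log_pow, Real.exp_neg, Real.exp_log (by positivity)]
  have h7 : -(k * Real.log (1 - δ)) ≤ -((1 - δ) * y * Real.log (1 - δ)) := by
    have := mul_le_mul_of_nonpos_right hk hlogneg.le
    linarith
  calc Real.exp ((1 - δ) * y) / (1 - δ) ^ k * Real.exp (-y)
      = Real.exp ((1 - δ) * y) * Real.exp (-y) * ((1 - δ) ^ k)⁻¹ := by ring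
  _ = Real.exp ((1 - δ) * y - y - k * Real.log (1 - δ)) := by
      rw [h6, ← Real.exp_add, ← Real.exp_add]; ring_nf
  _ ≤ Real.exp (-((δ + (1 - δ) * Real.log (1 - δ)) * y)) := by
      apply Real.exp_le_exp.2
      have := mul_le_mul_of_nonpos_right hk hlogneg.le
      nlinarith

end PoisPointwise

section PoisBounds

variable {Ω : Type*} [mΩ : MeasurableSpace Ω] {P : Measure Ω} [IsProbabilityMeasure P]
  {X κ : Ω → ℝ} {N : Ω → ℕ}

lemma pois_fun_le_one {y : ℝ} (hy : 0 ≤ y) (k : ℕ) :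
    y ^ k * Real.exp (-y) / (Nat.factorial k : ℝ) ≤ 1 := by
  have h1 : y ^ k / (Nat.factorial k : ℝ) ≤ Real.exp y := by
    have := Real.pow_div_factorial_le_exp (x := y) hy k
    simpa using this
  have h2 : y ^ k * Real.exp (-y) / (Nat.factorial k : ℝ)
      = (y ^ k / (Nat.factorial k : ℝ)) * Real.exp (-y) := by ring
  rw [h2]
  calc (y ^ k / (Nat.factorial k : ℝ)) * Real.exp (-y)
      ≤ Real.exp y * Real.exp (-y) := mul_le_mul_of_nonneg_right h1 (Real.exp_pos _).le
  _ = 1 := by rw [← Real.exp_add]; simp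

lemma pois_integrable (hκmeas : Measurable κ) (hκnn : ∀ ω, 0 ≤ κ ω) (k : ℕ) :
    Integrable (fun ω => κ ω ^ k * Real.exp (-κ ω) / (Nat.factorial k : ℝ)) P := by
  have hmeas : Measurable (fun ω => κ ω ^ k * Real.exp (-κ ω) / (Nat.factorial k : ℝ)) :=
    ((hκmeas.pow_const k).mul (hκmeas.neg.exp)).div_const _
  refine (integrable_const (1 : ℝ)).mono' hmeas.aestronglyMeasurable ?_
  refine Eventually.of_forall fun ω => ?_
  rw [Real.norm_eq_abs, abs_of_nonneg (div_nonneg (mul_nonneg (pow_nonneg (hκnn ω) k)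
    (Real.exp_pos _).le) (Nat.cast_nonneg _))]
  exact pois_fun_le_one (hκnn ω) k

lemma pois_integral (hXmeas : Measurable X) (hκmeas : Measurable κ)
    (hNmeas : Measurable N) (hN : CondPoisson P X κ N) (k : ℕ)
    {B : Set ℝ} (hB : MeasurableSet B) :
    (P ({ω | N ω = k} ∩ κ ⁻¹' B)).toReal
      = ∫ ω in κ ⁻¹' B, κ ω ^ k * Real.exp (-κ ω) / (Nat.factorial k : ℝ) ∂P := by
  have hm : MeasurableSpace.comap (fun ω => (X ω, κ ω)) inferInstance ≤ mΩ :=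
    (hXmeas.prodMk hκmeas).comap_le
  have hA : MeasurableSet[MeasurableSpace.comap (fun ω => (X ω, κ ω)) inferInstance]
      (κ ⁻¹' B) := by
    refine ⟨Set.univ ×ˢ B, MeasurableSet.univ.prod hB, ?_⟩
    ext ω; simp
  have hNk : MeasurableSet (N ⁻¹' {k}) := hNmeas (measurableSet_singleton k)
  have hind : Integrable (fun ω => if N ω = k then (1:ℝ) else 0) P := by
    have : (fun ω => if N ω = k then (1:ℝ) else 0)
        = Set.indicator (N ⁻¹' {k}) (fun _ => (1:ℝ)) := by
      ext ω; by_cases h : N ω = k <;> simp [Set.indicator_apply, h]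
    rw [this]; exact (integrable_const (1:ℝ)).indicator hNk
  have hsets : {ω | N ω = k} ∩ κ ⁻¹' B = κ ⁻¹' B ∩ N ⁻¹' {k} := by
    ext ω
    simp only [Set.mem_inter_iff, Set.mem_setOf_eq, Set.mem_preimage, Set.mem_singleton_iff]
    tauto
  have step1 : (P ({ω | N ω = k} ∩ κ ⁻¹' B)).toReal
      = ∫ ω in κ ⁻¹' B, (fun ω => if N ω = k then (1:ℝ) else 0) ω ∂P := by
    calc (P ({ω | N ω = k} ∩ κ ⁻¹' B)).toReal
        = (P (κ ⁻¹' B ∩ N ⁻¹' {k})).toReal := by rw [hsets]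
      _ = ∫ _ω in κ ⁻¹' B ∩ N ⁻¹' {k}, (1:ℝ) ∂P := by
          rw [setIntegral_const, smul_eq_mul, mul_one]; rfl
      _ = ∫ ω in κ ⁻¹' B, Set.indicator (N ⁻¹' {k}) (fun _ => (1:ℝ)) ω ∂P :=
          (setIntegral_indicator hNk).symm
      _ = ∫ ω in κ ⁻¹' B, (fun ω => if N ω = k then (1:ℝ) else 0) ω ∂P := by
          refine integral_congr_ae (Eventually.of_forall fun ω => ?_)
          by_cases h : N ω = k <;> simp [Set.indicator_apply, h]
  have step2 : ∫ ω in κ ⁻¹' B, (fun ω => if N ω = k then (1:ℝ) else 0) ω ∂P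
      = ∫ ω in κ ⁻¹' B, (P[(fun ω => if N ω = k then (1:ℝ) else 0) |
          MeasurableSpace.comap (fun ω => (X ω, κ ω)) inferInstance]) ω ∂P :=
    (setIntegral_condExp hm hind hA).symm
  have step3 : ∫ ω in κ ⁻¹' B, (P[(fun ω => if N ω = k then (1:ℝ) else 0) |
          MeasurableSpace.comap (fun ω => (X ω, κ ω)) inferInstance]) ω ∂P
      = ∫ ω in κ ⁻¹' B, κ ω ^ k * Real.exp (-κ ω) / (Nat.factorial k : ℝ) ∂P :=
    integral_congr_ae (ae_restrict_of_ae (hN k))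
  rw [step1, step2, step3]

lemma pois_set_bound (hXmeas : Measurable X) (hκmeas : Measurable κ)
    (hNmeas : Measurable N) (hκnn : ∀ ω, 0 ≤ κ ω) (hN : CondPoisson P X κ N) (k : ℕ)
    {B : Set ℝ} (hB : MeasurableSet B) {b : ℝ} (hb : 0 ≤ b)
    (hbound : ∀ y ∈ B, 0 ≤ y → y ^ k * Real.exp (-y) / (Nat.factorial k : ℝ) ≤ b) :
    P ({ω | N ω = k} ∩ κ ⁻¹' B) ≤ ENNReal.ofReal b := by
  rw [ENNReal.le_ofReal_iff_toReal_le (measure_ne_top P _) hb]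
  rw [pois_integral hXmeas hκmeas hNmeas hN k hB]
  have hint : IntegrableOn (fun ω => κ ω ^ k * Real.exp (-κ ω) / (Nat.factorial k : ℝ))
      (κ ⁻¹' B) P := (pois_integrable hκmeas hκnn k).integrableOn
  have hBmeas : MeasurableSet (κ ⁻¹' B) := hκmeas hB
  calc ∫ ω in κ ⁻¹' B, κ ω ^ k * Real.exp (-κ ω) / (Nat.factorial k : ℝ) ∂P
      ≤ ∫ _ω in κ ⁻¹' B, b ∂P := by
        refine setIntegral_mono_on hint integrableOn_const
          hBmeas fun ω hω => ?_
        exact hbound (κ ω) hω (hκnn ω)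
  _ = (P (κ ⁻¹' B)).toReal * b := by rw [setIntegral_const, smul_eq_mul]; rfl
  _ ≤ 1 * b := by
      have h1 : (P (κ ⁻¹' B)).toReal ≤ 1 := by
        simpa using ENNReal.toReal_mono ENNReal.one_ne_top prob_le_one
      exact mul_le_mul_of_nonneg_right h1 hb
  _ = b := one_mul b

end PoisBounds

section BadBounds

variable {Ω : Type*} [mΩ : MeasurableSpace Ω] {P : Measure Ω} [IsProbabilityMeasure P]
  {X κ : Ω → ℝ} {N : Ω → ℕ}

lemma bad_up_bound (hXmeas : Measurable X) (hκmeas : Measurable κ)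
    (hNmeas : Measurable N) (hκnn : ∀ ω, 0 ≤ κ ω) (hN : CondPoisson P X κ N)
    {δ t₂ : ℝ} (hδ0 : 0 < δ) (ht₂ : 0 < t₂) :
    ∃ c : ℝ, 0 < c ∧ ∃ C : ℝ, 0 ≤ C ∧ ∀ x ≥ (1:ℝ),
      (P {ω | (1 + δ) * κ ω ≤ (N ω : ℝ) ∧ δ * x < t₂ * (N ω : ℝ)}).toReal
        ≤ C * Real.exp (-c * x) := by
  set q : ℝ := Real.exp (δ / (1 + δ)) / (1 + δ) with hqdef
  have hq0 : 0 < q := by positivity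
  have hq1 : q < 1 := q_lt_one hδ0
  set s : ℝ := Real.sqrt q with hsdef
  have hs0 : 0 < s := Real.sqrt_pos.2 hq0
  have hssq : s * s = q := Real.mul_self_sqrt hq0.le
  have hs1 : s < 1 := by nlinarith
  have hlogq : Real.log q < 0 := Real.log_neg hq0 hq1
  set c : ℝ := -Real.log q * (δ / (2 * t₂)) with hcdef
  have hc0 : 0 < c := by
    have : 0 < -Real.log q := by linarith
    positivity
  refine ⟨c, hc0, (1 - s)⁻¹, inv_nonneg.2 (by linarith), fun x hx => ?_⟩
  set S : ℕ → Set Ω := fun k =>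
    {ω | N ω = k ∧ (1 + δ) * κ ω ≤ (k:ℝ) ∧ δ * x < t₂ * (k:ℝ)} with hSdef
  have hcover : {ω | (1 + δ) * κ ω ≤ (N ω : ℝ) ∧ δ * x < t₂ * (N ω : ℝ)} ⊆ ⋃ k, S k := by
    intro ω hω
    exact Set.mem_iUnion.2 ⟨N ω, rfl, hω.1, hω.2⟩
  set b : ℕ → ℝ := fun k => s ^ k * Real.exp (-c * x) with hbdef
  have hbnn : ∀ k, 0 ≤ b k := fun k => by positivity
  have hterm : ∀ k, P (S k) ≤ ENNReal.ofReal (b k) := by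
    intro k
    by_cases hcond : δ * x < t₂ * (k:ℝ)
    · have hSeq : S k = {ω | N ω = k} ∩ κ ⁻¹' {y : ℝ | (1 + δ) * y ≤ (k:ℝ)} := by
        ext ω
        simp only [hSdef, Set.mem_setOf_eq, Set.mem_inter_iff, Set.mem_preimage, hcond,
          and_true]
      have hB : MeasurableSet {y : ℝ | (1 + δ) * y ≤ (k:ℝ)} :=
        measurableSet_le (measurable_id.const_mul _) measurable_const
      have h1 : P (S k) ≤ ENNReal.ofReal (q ^ k) := by
        rw [hSeq]
        refine pois_set_bound hXmeas hκmeas hNmeas hκnn hN k hB (by positivity) ?_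
        exact fun y hy hynn => pois_pointwise_up hδ0 hynn k hy
      refine h1.trans (ENNReal.ofReal_le_ofReal ?_)
      -- q ^ k = s^k * s^k ≤ s^k * exp (-c x)
      have hsk : s ^ k ≤ Real.exp (-c * x) := by
        have hk : δ * x / t₂ ≤ (k:ℝ) := by
          rw [div_le_iff₀ ht₂]; nlinarith
        have hsk' : s ^ k = Real.exp ((k:ℝ) * (Real.log q / 2)) := by
          rw [← Real.log_sqrt hq0.le, ← hsdef, ← Real.log_pow,
            Real.exp_log (pow_pos hs0 k)]
        rw [hsk']
        apply Real.exp_le_exp.2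
        have hhalf : Real.log q / 2 < 0 := by linarith
        calc (k:ℝ) * (Real.log q / 2) ≤ (δ * x / t₂) * (Real.log q / 2) := by
              exact mul_le_mul_of_nonpos_right hk hhalf.le
        _ = -c * x := by rw [hcdef]; ring
      calc q ^ k = s ^ k * s ^ k := by rw [← mul_pow, hssq]
      _ ≤ s ^ k * Real.exp (-c * x) :=
          mul_le_mul_of_nonneg_left hsk (by positivity)
      _ = b k := rfl
    · have : S k = ∅ := by
        ext ω
        simp only [hSdef, Set.mem_setOf_eq, Set.mem_empty_iff_false, iff_false]
        rintro ⟨-, -, h⟩; exact hcond h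
      rw [this]
      simp
  have hsummable : Summable b := (summable_geometric_of_lt_one hs0.le hs1).mul_right _
  have hsum : P {ω | (1 + δ) * κ ω ≤ (N ω : ℝ) ∧ δ * x < t₂ * (N ω : ℝ)}
      ≤ ENNReal.ofReal (∑' k, b k) := by
    calc P _ ≤ P (⋃ k, S k) := measure_mono hcover
    _ ≤ ∑' k, P (S k) := measure_iUnion_le _
    _ ≤ ∑' k, ENNReal.ofReal (b k) := ENNReal.tsum_le_tsum hterm
    _ = ENNReal.ofReal (∑' k, b k) := (ENNReal.ofReal_tsum_of_nonneg hbnn hsummable).symm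
  have htsum : ∑' k, b k = (1 - s)⁻¹ * Real.exp (-c * x) := by
    rw [hbdef, tsum_mul_right, tsum_geometric_of_lt_one hs0.le hs1]
  refine (ENNReal.toReal_le_of_le_ofReal (tsum_nonneg hbnn) hsum).trans ?_
  rw [htsum]

lemma bad_low_bound (hXmeas : Measurable X) (hκmeas : Measurable κ)
    (hNmeas : Measurable N) (hκnn : ∀ ω, 0 ≤ κ ω) (hN : CondPoisson P X κ N)
    {δ t₂ : ℝ} (hδ0 : 0 < δ) (hδ1 : δ < 1) (ht₂ : 0 < t₂) :
    ∃ c : ℝ, 0 < c ∧ ∃ C : ℝ, 0 ≤ C ∧ ∀ x ≥ (1:ℝ),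
      (P {ω | (N ω : ℝ) ≤ (1 - δ) * κ ω ∧ δ * x < (1 - δ) * t₂ * κ ω}).toReal
        ≤ C * Real.exp (-c * x) := by
  have h1δ : (0:ℝ) < 1 - δ := by linarith
  set c₀ : ℝ := δ + (1 - δ) * Real.log (1 - δ) with hc₀def
  have hc₀ : 0 < c₀ := c0_pos hδ0 hδ1
  set β : ℝ := δ / ((1 - δ) * t₂) with hβdef
  have hβ0 : 0 < β := by positivity
  set c : ℝ := c₀ * β / 2 with hcdef
  have hc0 : 0 < c := by positivity
  set ρ : ℝ := Real.exp (-(c₀ / 2)) with hρdef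
  have hρ0 : 0 < ρ := Real.exp_pos _
  have hρ1 : ρ < 1 := by
    rw [hρdef, Real.exp_lt_one_iff]
    linarith
  refine ⟨c, hc0, (1 - ρ)⁻¹, inv_nonneg.2 (by linarith), fun x hx => ?_⟩
  set S : ℕ → Set Ω := fun k =>
    {ω | N ω = k ∧ (k:ℝ) ≤ (1 - δ) * κ ω ∧ δ * x < (1 - δ) * t₂ * κ ω} with hSdef
  have hcover : {ω | (N ω : ℝ) ≤ (1 - δ) * κ ω ∧ δ * x < (1 - δ) * t₂ * κ ω} ⊆ ⋃ k, S k :=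
    fun ω hω => Set.mem_iUnion.2 ⟨N ω, rfl, hω.1, hω.2⟩
  set b : ℕ → ℝ := fun k => ρ ^ k * Real.exp (-c * x) with hbdef
  have hbnn : ∀ k, 0 ≤ b k := fun k => by positivity
  have hterm : ∀ k, P (S k) ≤ ENNReal.ofReal (b k) := by
    intro k
    have hSeq : S k = {ω | N ω = k} ∩
        κ ⁻¹' {y : ℝ | (k:ℝ) ≤ (1 - δ) * y ∧ δ * x < (1 - δ) * t₂ * y} := by
      ext ω
      simp only [hSdef, Set.mem_setOf_eq, Set.mem_inter_iff, Set.mem_preimage]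
    have hB : MeasurableSet {y : ℝ | (k:ℝ) ≤ (1 - δ) * y ∧ δ * x < (1 - δ) * t₂ * y} := by
      refine MeasurableSet.inter ?_ ?_
      · exact measurableSet_le measurable_const (measurable_id.const_mul _)
      · exact measurableSet_lt measurable_const (measurable_id.const_mul _)
    rw [hSeq]
    refine pois_set_bound hXmeas hκmeas hNmeas hκnn hN k hB (hbnn k) ?_
    intro y hy hynn
    obtain ⟨hy1, hy2⟩ := hy
    have hyk : (k:ℝ) ≤ y := by nlinarith
    have hyβ : β * x ≤ y := by
      rw [hβdef, div_mul_eq_mul_div, div_le_iff₀ (by positivity)]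
      nlinarith
    have hplow := pois_pointwise_low hδ0 hδ1 hynn k hy1
    refine hplow.trans ?_
    have hexp : -(c₀ * y) ≤ -(c₀ * ((k:ℝ) + β * x) / 2) := by nlinarith
    calc Real.exp (-(c₀ * y)) ≤ Real.exp (-(c₀ * ((k:ℝ) + β * x) / 2)) :=
        Real.exp_le_exp.2 hexp
    _ = ρ ^ k * Real.exp (-c * x) := by
        rw [hρdef, ← Real.exp_nat_mul, ← Real.exp_add]
        congr 1
        rw [hcdef]
        ring
  have hsummable : Summable b := (summable_geometric_of_lt_one hρ0.le hρ1).mul_right _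
  have hsum : P {ω | (N ω : ℝ) ≤ (1 - δ) * κ ω ∧ δ * x < (1 - δ) * t₂ * κ ω}
      ≤ ENNReal.ofReal (∑' k, b k) := by
    calc P _ ≤ P (⋃ k, S k) := measure_mono hcover
    _ ≤ ∑' k, P (S k) := measure_iUnion_le _
    _ ≤ ∑' k, ENNReal.ofReal (b k) := ENNReal.tsum_le_tsum hterm
    _ = ENNReal.ofReal (∑' k, b k) := (ENNReal.ofReal_tsum_of_nonneg hbnn hsummable).symm
  have htsum : ∑' k, b k = (1 - ρ)⁻¹ * Real.exp (-c * x) := by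
    rw [hbdef, tsum_mul_right, tsum_geometric_of_lt_one hρ0.le hρ1]
  refine (ENNReal.toReal_le_of_le_ofReal (tsum_nonneg hbnn) hsum).trans ?_
  rw [htsum]

end BadBounds

lemma delta_choice {α ε W : ℝ} (hε : 0 < ε) (hW : 0 ≤ W) :
    ∃ δ : ℝ, 0 < δ ∧ δ < 1/2 ∧ ((1+δ)/(1-δ)) ^ α * W ≤ W + ε ∧
      W - ε ≤ ((1-δ)/(1+δ)) ^ α * W := by
  have hg : ContinuousAt (fun δ : ℝ => ((1+δ)/(1-δ)) ^ α) 0 := by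
    refine ContinuousAt.rpow_const ?_ ?_
    · exact (continuousAt_const.add continuousAt_id).div
        (continuousAt_const.sub continuousAt_id) (by norm_num)
    · left; norm_num
  set ε' : ℝ := min (ε / (W+1)) (1/2) with hε'def
  have hε'0 : 0 < ε' := lt_min (by positivity) (by norm_num)
  have hε'le : ε' ≤ ε/(W+1) := min_le_left _ _
  have hε'half : ε' ≤ 1/2 := min_le_right _ _
  obtain ⟨ρ, hρ0, hρ⟩ := Metric.continuousAt_iff.1 hg ε' hε'0
  set δ : ℝ := min (ρ/2) (1/4) with hδdef
  have hδ0 : 0 < δ := lt_min (by linarith) (by norm_num)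
  have hδquarter : δ ≤ 1/4 := min_le_right _ _
  have hδρ : dist δ 0 < ρ := by
    rw [Real.dist_eq, sub_zero, abs_of_pos hδ0]
    calc δ ≤ ρ/2 := min_le_left _ _
    _ < ρ := by linarith
  have hgδ := hρ hδρ
  rw [Real.dist_eq] at hgδ
  have hg0 : ((1+(0:ℝ))/(1-0)) ^ α = 1 := by norm_num
  rw [hg0] at hgδ
  set g : ℝ := ((1+δ)/(1-δ)) ^ α with hgdef
  have habs := abs_lt.1 hgδ
  have hglt : g < 1 + ε' := by linarith [habs.2]
  have hggt : 1 - ε' < g := by linarith [habs.1]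
  have hgpos : 0 < g := by linarith
  have h1mδ : (0:ℝ) < 1 - δ := by linarith
  have h1pδ : (0:ℝ) < 1 + δ := by linarith
  have hWε : ε' * W ≤ ε := by
    have h1 : ε' * W ≤ ε/(W+1) * W := mul_le_mul_of_nonneg_right hε'le hW
    have h2 : ε/(W+1) * W ≤ ε := by
      rw [div_mul_eq_mul_div, div_le_iff₀ (by linarith)]
      nlinarith
    linarith
  refine ⟨δ, hδ0, by linarith, ?_, ?_⟩
  · nlinarith
  · have hinv : ((1-δ)/(1+δ)) ^ α = g⁻¹ := by
      have hbase : (1-δ)/(1+δ) = ((1+δ)/(1-δ))⁻¹ := by rw [inv_div]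
      rw [hgdef, hbase, Real.inv_rpow (by positivity)]
    have hginv_ge : 1 - ε' ≤ g⁻¹ := by
      have h1 : 1 ≤ (1+ε') * g⁻¹ := by
        have := mul_le_mul_of_nonneg_right hglt.le (inv_nonneg.2 hgpos.le)
        rw [mul_inv_cancel₀ hgpos.ne'] at this
        linarith
      have h2 : (1+ε') * (1-ε') ≤ (1+ε') * g⁻¹ := by nlinarith
      exact le_of_mul_le_mul_left h2 (by linarith)
    rw [hinv]
    nlinarith [mul_le_mul_of_nonneg_right hginv_ge hW]

section MainThm

variable {Ω : Type*} [mΩ : MeasurableSpace Ω] {P : Measure Ω} [IsProbabilityMeasure P]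
  {α : ℝ} {X κ : Ω → ℝ} {L : ℝ → ℝ} {w : ℝ → ℝ → ℝ} {N : Ω → ℕ}

theorem jointRV_main (hα : 1 < α)
    (hXmeas : Measurable X) (hκmeas : Measurable κ)
    (hXnn : ∀ ω, 0 ≤ X ω) (hκnn : ∀ ω, 0 ≤ κ ω)
    (hjrv : JointRegVarying P X κ α L w)
    (hNmeas : Measurable N) (hN : CondPoisson P X κ N) :
    ∀ t₁ ≥ (0 : ℝ), ∀ t₂ ≥ (0 : ℝ),
      Tendsto (fun x => tailP P (fun ω => t₁ * X ω + t₂ * (N ω : ℝ)) x / (x ^ (-α) * L x))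
        atTop (𝓝 (w t₁ t₂)) := by
  intro t₁ ht₁ t₂ ht₂
  rcases eq_or_lt_of_le ht₂ with h0 | ht₂pos
  · subst h0
    simpa using hjrv.2.2.1 t₁ ht₁ 0 le_rfl
  · set W := w t₁ t₂ with hWdef
    have hW0 : 0 ≤ W := w_nonneg hjrv ht₁ ht₂
    have hφpos : ∀ x > (0:ℝ), 0 < x ^ (-α) * L x := phi_pos hjrv.2.1
    rw [Metric.tendsto_nhds]
    intro ε hε
    obtain ⟨δ, hδ0, hδhalf, hup, hlow⟩ := delta_choice (α := α) (half_pos hε) hW0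
    have hδ1 : δ < 1 := by linarith
    have h1mδ : (0:ℝ) < 1 - δ := by linarith
    have h1pδ : (0:ℝ) < 1 + δ := by linarith
    -- UPPER BOUND
    set u₁ : ℝ := t₁ / (1 - δ) with hu₁def
    set u₂ : ℝ := (1 + δ) / (1 - δ) * t₂ with hu₂def
    have hu₁ : 0 ≤ u₁ := by positivity
    have hu₂ : 0 ≤ u₂ := by positivity
    have hwu : w u₁ u₂ ≤ W + ε/2 := by
      have hc : (0:ℝ) < (1 + δ)/(1 - δ) := by positivity
      have hmono : w u₁ u₂ ≤ w ((1 + δ)/(1 - δ) * t₁) ((1 + δ)/(1 - δ) * t₂) := by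
        refine w_mono hjrv hXnn hκnn hu₁ ?_ hu₂ le_rfl
        rw [hu₁def, div_mul_eq_mul_div]
        gcongr
        nlinarith [mul_nonneg hδ0.le ht₁]
      have hhom := w_homog' hjrv ht₁ ht₂ hc
      rw [hhom] at hmono
      exact hmono.trans hup
    obtain ⟨cu, hcu, Cu, hCu, hBup⟩ := bad_up_bound hXmeas hκmeas hNmeas hκnn hN hδ0 ht₂pos
    have hIncl : ∀ x : ℝ, {ω | x < t₁ * X ω + t₂ * (N ω : ℝ)}
        ⊆ {ω | x < u₁ * X ω + u₂ * κ ω}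
          ∪ {ω | (1 + δ) * κ ω ≤ (N ω : ℝ) ∧ δ * x < t₂ * (N ω : ℝ)} := by
      intro x ω hω
      simp only [Set.mem_setOf_eq] at hω
      by_cases hcase : δ * x < t₂ * (N ω : ℝ)
      · by_cases hcase2 : (1 + δ) * κ ω ≤ (N ω : ℝ)
        · exact Or.inr ⟨hcase2, hcase⟩
        · left
          push_neg at hcase2
          show x < u₁ * X ω + u₂ * κ ω
          have hNle : t₂ * (N ω : ℝ) ≤ (1 + δ) * t₂ * κ ω := by
            have := mul_le_mul_of_nonneg_left hcase2.le ht₂pos.le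
            linarith [this]
          have hkey : (1 - δ) * (u₁ * X ω + u₂ * κ ω) = t₁ * X ω + (1 + δ) * t₂ * κ ω := by
            rw [hu₁def, hu₂def]
            field_simp
          have hSnn : 0 ≤ u₁ * X ω + u₂ * κ ω :=
            add_nonneg (mul_nonneg hu₁ (hXnn ω)) (mul_nonneg hu₂ (hκnn ω))
          linarith [mul_nonneg hδ0.le hSnn, hω, hNle, hkey]
      · left
        push_neg at hcase
        show x < u₁ * X ω + u₂ * κ ω
        have h5 : (1 - δ) * x < t₁ * X ω := by linarith
        have h6 : x < u₁ * X ω := by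
          rw [hu₁def, div_mul_eq_mul_div, lt_div_iff₀ h1mδ]
          linarith
        linarith [mul_nonneg hu₂ (hκnn ω), h6]
    have htail_up : ∀ x : ℝ, tailP P (fun ω => t₁ * X ω + t₂ * (N ω : ℝ)) x
        ≤ tailP P (fun ω => u₁ * X ω + u₂ * κ ω) x
          + (P {ω | (1 + δ) * κ ω ≤ (N ω : ℝ) ∧ δ * x < t₂ * (N ω : ℝ)}).toReal := by
      intro x
      unfold tailP
      rw [← ENNReal.toReal_add (measure_ne_top _ _) (measure_ne_top _ _)]
      refine ENNReal.toReal_mono (ENNReal.add_ne_top.2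
        ⟨measure_ne_top _ _, measure_ne_top _ _⟩) ?_
      exact (measure_mono (hIncl x)).trans (measure_union_le _ _)
    have hbadlim_up : Tendsto (fun x =>
        (P {ω | (1 + δ) * κ ω ≤ (N ω : ℝ) ∧ δ * x < t₂ * (N ω : ℝ)}).toReal
          / (x ^ (-α) * L x)) atTop (𝓝 0) := by
      have hg : Tendsto (fun x => Cu * (Real.exp (-cu * x) / (x ^ (-α) * L x)))
          atTop (𝓝 0) := by
        simpa using (exp_negligible hjrv hα hcu).const_mul Cu
      refine squeeze_zero' ?_ ?_ hg
      · filter_upwards [eventually_gt_atTop (0:ℝ)] with x hx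
        exact div_nonneg ENNReal.toReal_nonneg (hφpos x hx).le
      · filter_upwards [eventually_ge_atTop (1:ℝ)] with x hx
        have hφ := hφpos x (by linarith)
        calc (P {ω | (1 + δ) * κ ω ≤ (N ω : ℝ) ∧ δ * x < t₂ * (N ω : ℝ)}).toReal
            / (x ^ (-α) * L x) ≤ (Cu * Real.exp (-cu * x)) / (x ^ (-α) * L x) := by
              gcongr
              exact hBup x hx
        _ = Cu * (Real.exp (-cu * x) / (x ^ (-α) * L x)) := by rw [mul_div_assoc]
    have hupper_lim : Tendsto (fun x =>
        tailP P (fun ω => u₁ * X ω + u₂ * κ ω) x / (x ^ (-α) * L x)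
          + (P {ω | (1 + δ) * κ ω ≤ (N ω : ℝ) ∧ δ * x < t₂ * (N ω : ℝ)}).toReal
            / (x ^ (-α) * L x)) atTop (𝓝 (w u₁ u₂ + 0)) :=
      (hjrv.2.2.1 u₁ hu₁ u₂ hu₂).add hbadlim_up
    have hupper_ev : ∀ᶠ x in atTop,
        tailP P (fun ω => t₁ * X ω + t₂ * (N ω : ℝ)) x / (x ^ (-α) * L x) < W + ε := by
      have hlt : w u₁ u₂ + 0 < W + ε := by linarith
      filter_upwards [hupper_lim.eventually (eventually_lt_nhds hlt),
        eventually_ge_atTop (1:ℝ)] with x hx1 hx2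
      have hφ := hφpos x (by linarith)
      calc tailP P (fun ω => t₁ * X ω + t₂ * (N ω : ℝ)) x / (x ^ (-α) * L x)
          ≤ (tailP P (fun ω => u₁ * X ω + u₂ * κ ω) x
            + (P {ω | (1 + δ) * κ ω ≤ (N ω : ℝ) ∧ δ * x < t₂ * (N ω : ℝ)}).toReal)
              / (x ^ (-α) * L x) := by
            gcongr
            exact htail_up x
      _ = tailP P (fun ω => u₁ * X ω + u₂ * κ ω) x / (x ^ (-α) * L x)
            + (P {ω | (1 + δ) * κ ω ≤ (N ω : ℝ) ∧ δ * x < t₂ * (N ω : ℝ)}).toReal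
              / (x ^ (-α) * L x) := add_div _ _ _
      _ < W + ε := hx1
    -- LOWER BOUND
    set v₁ : ℝ := t₁ / (1 + δ) with hv₁def
    set v₂ : ℝ := (1 - δ) / (1 + δ) * t₂ with hv₂def
    have hv₁ : 0 ≤ v₁ := by positivity
    have hv₂ : 0 ≤ v₂ := by positivity
    have hwv : W - ε/2 ≤ w v₁ v₂ := by
      have hd : (0:ℝ) < (1 - δ)/(1 + δ) := by positivity
      have hmono : w ((1 - δ)/(1 + δ) * t₁) ((1 - δ)/(1 + δ) * t₂) ≤ w v₁ v₂ := by
        refine w_mono hjrv hXnn hκnn (by positivity) ?_ (by positivity) le_rfl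
        rw [hv₁def, div_mul_eq_mul_div]
        gcongr
        nlinarith [mul_nonneg hδ0.le ht₁]
      have hhom := w_homog' hjrv ht₁ ht₂ hd
      rw [hhom] at hmono
      exact hlow.trans hmono
    obtain ⟨cl, hcl, Cl, hCl, hBlow⟩ :=
      bad_low_bound hXmeas hκmeas hNmeas hκnn hN hδ0 hδ1 ht₂pos
    have hIncl2 : ∀ x : ℝ, 0 ≤ x → {ω | x < v₁ * X ω + v₂ * κ ω}
        ⊆ {ω | x < t₁ * X ω + t₂ * (N ω : ℝ)}
          ∪ {ω | (N ω : ℝ) ≤ (1 - δ) * κ ω ∧ δ * x < (1 - δ) * t₂ * κ ω} := by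
      intro x hx0 ω hω
      simp only [Set.mem_setOf_eq] at hω
      by_cases hg : x < t₁ * X ω + t₂ * (N ω : ℝ)
      · exact Or.inl hg
      · right
        push_neg at hg
        have hkey : (1 + δ) * (v₁ * X ω + v₂ * κ ω) = t₁ * X ω + (1 - δ) * t₂ * κ ω := by
          rw [hv₁def, hv₂def]
          field_simp
        have h7 : (1 + δ) * x < t₁ * X ω + (1 - δ) * t₂ * κ ω := by
          have := mul_lt_mul_of_pos_left hω h1pδ
          linarith [hkey]
        have hNnn : (0:ℝ) ≤ t₂ * (N ω : ℝ) := mul_nonneg ht₂pos.le (Nat.cast_nonneg _)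
        have h8 : t₂ * (N ω : ℝ) + δ * x < (1 - δ) * t₂ * κ ω := by linarith
        constructor
        · have h9 : t₂ * (N ω : ℝ) < t₂ * ((1 - δ) * κ ω) := by
            linarith [mul_nonneg hδ0.le hx0]
          have := lt_of_mul_lt_mul_left h9 ht₂pos.le
          linarith
        · linarith
    have htail_low : ∀ x : ℝ, 0 ≤ x → tailP P (fun ω => v₁ * X ω + v₂ * κ ω) x
        ≤ tailP P (fun ω => t₁ * X ω + t₂ * (N ω : ℝ)) x
          + (P {ω | (N ω : ℝ) ≤ (1 - δ) * κ ω ∧ δ * x < (1 - δ) * t₂ * κ ω}).toReal := by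
      intro x hx0
      unfold tailP
      rw [← ENNReal.toReal_add (measure_ne_top _ _) (measure_ne_top _ _)]
      refine ENNReal.toReal_mono (ENNReal.add_ne_top.2
        ⟨measure_ne_top _ _, measure_ne_top _ _⟩) ?_
      exact (measure_mono (hIncl2 x hx0)).trans (measure_union_le _ _)
    have hbadlim_low : Tendsto (fun x =>
        (P {ω | (N ω : ℝ) ≤ (1 - δ) * κ ω ∧ δ * x < (1 - δ) * t₂ * κ ω}).toReal
          / (x ^ (-α) * L x)) atTop (𝓝 0) := by
      have hg : Tendsto (fun x => Cl * (Real.exp (-cl * x) / (x ^ (-α) * L x)))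
          atTop (𝓝 0) := by
        simpa using (exp_negligible hjrv hα hcl).const_mul Cl
      refine squeeze_zero' ?_ ?_ hg
      · filter_upwards [eventually_gt_atTop (0:ℝ)] with x hx
        exact div_nonneg ENNReal.toReal_nonneg (hφpos x hx).le
      · filter_upwards [eventually_ge_atTop (1:ℝ)] with x hx
        have hφ := hφpos x (by linarith)
        calc (P {ω | (N ω : ℝ) ≤ (1 - δ) * κ ω ∧ δ * x < (1 - δ) * t₂ * κ ω}).toReal
            / (x ^ (-α) * L x) ≤ (Cl * Real.exp (-cl * x)) / (x ^ (-α) * L x) := by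
              gcongr
              exact hBlow x hx
        _ = Cl * (Real.exp (-cl * x) / (x ^ (-α) * L x)) := by rw [mul_div_assoc]
    have hlower_lim : Tendsto (fun x =>
        tailP P (fun ω => v₁ * X ω + v₂ * κ ω) x / (x ^ (-α) * L x)
          - (P {ω | (N ω : ℝ) ≤ (1 - δ) * κ ω ∧ δ * x < (1 - δ) * t₂ * κ ω}).toReal
            / (x ^ (-α) * L x)) atTop (𝓝 (w v₁ v₂ - 0)) :=
      (hjrv.2.2.1 v₁ hv₁ v₂ hv₂).sub hbadlim_low
    have hlower_ev : ∀ᶠ x in atTop,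
        W - ε < tailP P (fun ω => t₁ * X ω + t₂ * (N ω : ℝ)) x / (x ^ (-α) * L x) := by
      have hgt : W - ε < w v₁ v₂ - 0 := by linarith
      filter_upwards [hlower_lim.eventually (eventually_gt_nhds hgt),
        eventually_ge_atTop (1:ℝ)] with x hx1 hx2
      have hφ := hφpos x (by linarith)
      have h10 := htail_low x (by linarith)
      have h11 : tailP P (fun ω => v₁ * X ω + v₂ * κ ω) x / (x ^ (-α) * L x)
          ≤ tailP P (fun ω => t₁ * X ω + t₂ * (N ω : ℝ)) x / (x ^ (-α) * L x)
            + (P {ω | (N ω : ℝ) ≤ (1 - δ) * κ ω ∧ δ * x < (1 - δ) * t₂ * κ ω}).toReal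
              / (x ^ (-α) * L x) := by
        rw [← add_div]
        gcongr
      linarith
    filter_upwards [hupper_ev, hlower_ev] with x h1 h2
    rw [Real.dist_eq, abs_sub_lt_iff]
    exact ⟨by linarith, by linarith⟩

end MainThm

/-- Joint regular variation of `(X, κ)` transfers to `(X, N)` when `N` is conditionally
Poisson with (random) parameter `κ`: the same slowly varying function `L` and the same
limit function `w` work for `(X, N)`. -/
theorem jointRV_transfer_condPoisson
    {Ω : Type*} [MeasurableSpace Ω] (P : Measure Ω) [IsProbabilityMeasure P]
    (α : ℝ) (hα : 1 < α) (hnonint : ∀ n : ℕ, α ≠ n)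
    (X κ : Ω → ℝ) (L : ℝ → ℝ) (w : ℝ → ℝ → ℝ)
    (hXmeas : Measurable X) (hκmeas : Measurable κ)
    (hXnn : ∀ ω, 0 ≤ X ω) (hκnn : ∀ ω, 0 ≤ κ ω)
    (hjrv : JointRegVarying P X κ α L w)
    (N : Ω → ℕ) (hNmeas : Measurable N)
    (hN : CondPoisson P X κ N) :
    (∀ t₁ ≥ (0 : ℝ), ∀ t₂ ≥ (0 : ℝ),
      Tendsto (fun x => tailP P (fun ω => t₁ * X ω + t₂ * N ω) x / (x ^ (-α) * L x))
        atTop (𝓝 (w t₁ t₂))) ∧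
    JointRegVarying P X (fun ω => (N ω : ℝ)) α L w := by
  have main := jointRV_main hα hXmeas hκmeas hXnn hκnn hjrv hNmeas hN
  exact ⟨main, hjrv.1, hjrv.2.1, main, hjrv.2.2.2⟩
end
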